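/- arXiv:1005.5595 — 6 statements merged into one kernel-verified Lean document; each statement's English description precedes it below -/
import Mathlib

section
/- The derivation d₀ of B is an outer derivation: there is no element u ∈ B such that d₀ = ad_u (where ad_u(x) = [u,x]). -/
/-- The derivation `d₀` of the Block type Lie algebra `B`
(determined on the basis by `d₀ (L (β,j)) = β • L (β,j)`) is an outer derivation:
there is no `u ∈ B` with `d₀ = ad u`, i.e. with `d₀ x = ⁅u, x⁆` for all `x`. -/
theorem d0_is_outer
    {F : Type*} [Field F] [IsAlgClosed F] [CharZero F]
    {B : Type*} [LieRing B] [LieAlgebra F B]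
    (L : Module.Basis (ℤ × ℕ) F B)
    (hL : ∀ (α β : ℤ) (i j : ℕ),
      ⁅L (α, i), L (β, j)⁆ =
        (((α - 1) * (j + 1) - (β - 1) * (i + 1) : ℤ) : F) • L (α + β, i + j))
    (d₀ : B →ₗ[F] B)
    (hd₀ : ∀ (β : ℤ) (j : ℕ), d₀ (L (β, j)) = (β : F) • L (β, j)) :
    ¬ ∃ u : B, ∀ x : B, d₀ x = ⁅u, x⁆ := by
  rintro ⟨u, hu⟩
  set c : F := L.repr u (0, 0) with hc
  have key : ∀ j : ℕ, (1 : F) = (-(j + 1) : F) * c := by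
    intro j
    have h1 : L.repr (d₀ (L (1, j))) (1, j) = 1 := by
      rw [hd₀]; simp
    let φ : B →ₗ[F] B :=
      { toFun := fun x => ⁅x, L (1, j)⁆
        map_add' := fun a b => add_lie a b _
        map_smul' := fun r a => smul_lie r a _ }
    have h2 : ⁅u, L (1, j)⁆ =
        (L.repr u).sum fun p r => r • ⁅L p, L (1, j)⁆ := by
      have h := congrArg φ (L.linearCombination_repr u)
      rw [Finsupp.linearCombination_apply, map_finsuppSum] at h
      simpa [φ] using h.symm
    have h3 : L.repr ⁅u, L (1, j)⁆ (1, j) = (-(j + 1) : F) * c := by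
      rw [h2, map_finsuppSum, Finsupp.sum_apply]
      rw [Finsupp.sum_eq_single (0, 0)]
      · rcases eq_or_ne (L.repr u (0, 0)) 0 with h | h
        · rw [hc, h]; simp
        · rw [hL]
          simp only [map_smul, Finsupp.smul_apply, L.repr_self]
          norm_num [Finsupp.single_apply, hc]
          ring
      · rintro ⟨a, i⟩ hne hpne
        rw [hL]
        simp only [map_smul, Finsupp.smul_apply, L.repr_self]
        rw [Finsupp.single_apply, if_neg, smul_zero, smul_zero]
        intro hcontra
        apply hpne
        have h1 : a + 1 = 1 := congrArg Prod.fst hcontra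
        have h2 : i + j = j := congrArg Prod.snd hcontra
        simp only [Prod.mk.injEq]
        omega
      · intro _; simp
    rw [hu, h3] at h1
    exact h1.symm
  have k0 := key 0
  have k1 := key 1
  norm_num at k0 k1
  have hc0 : c = 0 := by linear_combination k1 - k0
  rw [hc0] at k0
  simp at k0
end

section
/- (Theorem 2.1, existence part) Every derivation d of the Lie algebra B can be written as d = ad_u + λ·d₀ for some u ∈ B and λ ∈ F; that is, Der(B) = ad(B) + F·d₀. -/
set_option linter.unusedSectionVars false

section Aux
variable {F : Type*} [Field F] [CharZero F]
variable {B : Type*} [LieRing B] [LieAlgebra F B]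
variable (L : Module.Basis (ℤ × ℕ) F B)

private theorem aux_hLc (hL : ∀ (α β : ℤ) (i j : ℕ),
      ⁅L (α, i), L (β, j)⁆ =
        (((α - 1) * (j + 1) - (β - 1) * (i + 1) : ℤ) : F) • L (α + β, i + j))
    (α β γ : ℤ) (i j k : ℕ) (c : ℤ)
    (h1 : ((α - 1) * (j + 1) - (β - 1) * (i + 1) : ℤ) = c)
    (h2 : α + β = γ) (h3 : i + j = k) :
    ⁅L (α, i), L (β, j)⁆ = (c : F) • L (γ, k) := by
  subst h2 h3; rw [hL, h1]

private theorem aux_BB (hL : ∀ (α β : ℤ) (i j : ℕ),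
      ⁅L (α, i), L (β, j)⁆ =
        (((α - 1) * (j + 1) - (β - 1) * (i + 1) : ℤ) : F) • L (α + β, i + j))
    (α γ : ℤ) (k : ℕ) (y : B) :
    L.repr ⁅L (α, 0), y⁆ (γ, k) =
      (((α - 1) * (k + 1) - (γ - α - 1) : ℤ) : F) * L.repr y (γ - α, k) := by
  let f₁ : B →ₗ[F] F :=
    Finsupp.lapply (γ, k) ∘ₗ (L.repr : B →ₗ[F] (ℤ × ℕ →₀ F)) ∘ₗ LieAlgebra.ad F B (L (α, 0))
  let f₂ : B →ₗ[F] F :=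
    (((α - 1) * (k + 1) - (γ - α - 1) : ℤ) : F) •
      (Finsupp.lapply (γ - α, k) ∘ₗ (L.repr : B →ₗ[F] (ℤ × ℕ →₀ F)))
  have hf : f₁ = f₂ := by
    apply L.ext
    rintro ⟨β, j⟩
    simp only [f₁, f₂, LinearMap.comp_apply, LieAlgebra.ad_apply, LinearMap.smul_apply,
      LinearEquiv.coe_coe, Finsupp.lapply_apply, smul_eq_mul]
    rw [hL]
    simp only [map_smul, Module.Basis.repr_self, Finsupp.smul_apply, Finsupp.single_apply,
      Prod.mk.injEq, smul_eq_mul]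
    have hcond : (α + β = γ ∧ 0 + j = k) ↔ (β = γ - α ∧ j = k) := by omega
    rw [if_congr hcond rfl rfl]
    split_ifs with hc
    · obtain ⟨hb, hj⟩ := hc; subst hb; subst hj; push_cast; ring
    · ring
  simpa [f₁, f₂, LieAlgebra.ad_apply] using LinearMap.congr_fun hf y

/-- bracket on the left of a Finsupp.sum -/
private theorem aux_sum_lie' (f : ℤ × ℕ →₀ F) (g : ℤ × ℕ → F → B) (y : B) :
    ⁅f.sum g, y⁆ = f.sum fun p c => ⁅g p c, y⁆ := by
  let m : B →ₗ[F] B :=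
    { toFun := fun x => ⁅x, y⁆
      map_add' := fun a b => add_lie a b y
      map_smul' := fun c a => smul_lie c a y }
  exact map_finsuppSum m f g

private theorem aux_elem0 (x : B) (hx : ∀ q : ℤ × ℕ, L.repr x q = 0) : x = 0 := by
  have : L.repr x = 0 := Finsupp.ext fun q => hx q
  simpa using L.repr.map_eq_zero_iff.mp this

end Aux

set_option maxHeartbeats 4000000 in
/-- Theorem 2.1, existence part. Every derivation `d` of the Block type
Lie algebra `B` can be written as `d = ad u + λ • d₀` for some `u ∈ B` and `λ ∈ F`, where
`d₀` is the derivation determined by `d₀ (L (β,j)) = β • L (β,j)`. -/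
theorem derivation_eq_inner_add_smul_d0
    {F : Type*} [Field F] [IsAlgClosed F] [CharZero F]
    {B : Type*} [LieRing B] [LieAlgebra F B]
    (L : Module.Basis (ℤ × ℕ) F B)
    (hL : ∀ (α β : ℤ) (i j : ℕ),
      ⁅L (α, i), L (β, j)⁆ =
        (((α - 1) * (j + 1) - (β - 1) * (i + 1) : ℤ) : F) • L (α + β, i + j))
    (d₀ : LieDerivation F B B)
    (hd₀ : ∀ (β : ℤ) (j : ℕ), d₀ (L (β, j)) = (β : F) • L (β, j)) :
    ∀ d : LieDerivation F B B, ∃ (u : B) (lam : F),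
      ∀ x : B, d x = ⁅u, x⁆ + lam • d₀ x := by
  classical
  intro d
  have adap : ∀ (u x : B), (LieDerivation.ad F B u) x = ⁅u, x⁆ := by
    intro u x
    have := LieDerivation.coe_ad_apply_eq_ad_apply (R := F) (L := B) u
    calc (LieDerivation.ad F B u) x = (LieAlgebra.ad F B u) x := by rw [← this]; rfl
    _ = ⁅u, x⁆ := LieAlgebra.ad_apply ..
  -- step (†)
  have dagger : ∀ (β : ℤ) (j : ℕ),
      ((β - 1 : ℤ) : F) * L.repr (d (L (0, 0))) (β, j)
        = ((β + j : ℤ) : F) * L.repr (d (L (1, 0))) (β + 1, j) := by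
    intro β j
    have e1 : ⁅L ((0 : ℤ), (0 : ℕ)), L (1, 0)⁆ = ((-1 : ℤ) : F) • L (1, 0) :=
      aux_hLc L hL 0 1 1 0 0 0 (-1) (by ring) (by ring) rfl
    have e2 := d.apply_lie_eq_add (L (0, 0)) (L (1, 0))
    rw [e1, ← lie_skew (d (L (0, 0))) (L (1, 0))] at e2
    have e3 := congrArg (fun z => L.repr z (β + 1, j)) e2
    simp only [map_smul, map_add, map_neg, Finsupp.smul_apply, Finsupp.add_apply,
      Finsupp.neg_apply, smul_eq_mul] at e3
    rw [aux_BB L hL 1 (β + 1) j, aux_BB L hL 0 (β + 1) j] at e3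
    rw [show ((β : ℤ) + 1 - 1) = β by ring, show ((β : ℤ) + 1 - 0) = β + 1 by ring] at e3
    push_cast at e3 ⊢
    linear_combination -e3
  have diag0 : ∀ q : ℤ × ℕ, q.1 + q.2 = 0 → L.repr (d (L (0, 0))) q = 0 := by
    rintro ⟨β, j⟩ hq
    have := dagger β j
    simp only at hq
    rw [show ((β + j : ℤ) : F) = 0 by exact_mod_cast congrArg Int.cast hq] at this
    have hb : ((β - 1 : ℤ) : F) ≠ 0 := Int.cast_ne_zero.mpr (by omega)
    have := this
    rw [zero_mul] at this
    exact (mul_eq_zero.mp this).resolve_left hb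
  -- u₁
  set u₁ : B := (L.repr (d (L (0, 0)))).sum
    (fun p c => (((p.1 + p.2 : ℤ) : F)⁻¹ * c) • L p) with hu₁def
  have hu1 : ⁅u₁, L ((0 : ℤ), (0 : ℕ))⁆ = d (L (0, 0)) := by
    rw [hu₁def, aux_sum_lie']
    have : ((L.repr (d (L (0, 0)))).sum fun p c => ⁅(((p.1 + p.2 : ℤ) : F)⁻¹ * c) • L p, L ((0 : ℤ), (0 : ℕ))⁆)
        = (L.repr (d (L (0, 0)))).sum fun p c => c • L p := by
      apply Finsupp.sum_congr
      rintro ⟨a, b⟩ hp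
      have hne : (a + b : ℤ) ≠ 0 := by
        intro h0
        exact Finsupp.mem_support_iff.mp hp (diag0 (a, b) h0)
      have hbr : ⁅L (a, b), L ((0 : ℤ), (0 : ℕ))⁆ = ((a + b : ℤ) : F) • L (a, b) :=
        aux_hLc L hL a 0 a b 0 b (a + b) (by push_cast; try ring) (by ring) rfl
      rw [smul_lie, hbr, smul_smul]
      rw [show (((a, b).1 + ((a, b).2 : ℤ) : ℤ) : F)⁻¹ * L.repr (d (L (0, 0))) (a, b) * ((a + b : ℤ) : F)
        = L.repr (d (L (0, 0))) (a, b) * ((((a + b : ℤ) : F))⁻¹ * ((a + b : ℤ) : F)) by ring]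
      rw [inv_mul_cancel₀ (Int.cast_ne_zero.mpr hne), mul_one]
    rw [this]
    have := L.linearCombination_repr (d (L (0, 0)))
    rwa [Finsupp.linearCombination_apply] at this
  set d₁ : LieDerivation F B B := d - LieDerivation.ad F B u₁ with hd₁def
  have d₁ap : ∀ x : B, d₁ x = d x - ⁅u₁, x⁆ := by
    intro x; rw [hd₁def, LieDerivation.sub_apply, adap]
  have hd₁h : d₁ (L ((0 : ℤ), (0 : ℕ))) = 0 := by rw [d₁ap, hu1, sub_self]
  -- grading
  have grading1 : ∀ (β : ℤ) (j : ℕ) (q : ℤ × ℕ), q.1 + q.2 ≠ β + j →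
      L.repr (d₁ (L (β, j))) q = 0 := by
    rintro β j ⟨γ, k⟩ hq
    have e1 : ⁅L ((0 : ℤ), (0 : ℕ)), L (β, j)⁆ = ((-(β + j) : ℤ) : F) • L (β, j) :=
      aux_hLc L hL 0 β β 0 j j (-(β + j)) (by push_cast; try ring) (by ring) (by omega)
    have e2 := d₁.apply_lie_eq_add (L (0, 0)) (L (β, j))
    rw [e1, hd₁h, zero_lie, add_zero, map_smul] at e2
    have e3 := congrArg (fun z => L.repr z (γ, k)) e2
    simp only [map_smul, Finsupp.smul_apply, smul_eq_mul] at e3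
    rw [aux_BB L hL 0 γ k, show (γ - 0 : ℤ) = γ by ring] at e3
    have key : ((((-(β + (j : ℤ))) : ℤ) : F) - (((0 - 1) * (k + 1) - (γ - 1) : ℤ) : F)) * L.repr (d₁ (L (β, j))) (γ, k) = 0 := by
      rw [sub_mul, e3, sub_self]
    have hcoef : ((((-(β + (j : ℤ))) : ℤ) : F) - (((0 - 1) * (k + 1) - (γ - 1) : ℤ) : F)) ≠ 0 := by
      rw [show ((((-(β + (j : ℤ))) : ℤ) : F) - (((0 - 1) * (k + 1) - (γ - 1) : ℤ) : F))
        = (((γ + k) - (β + j) : ℤ) : F) by push_cast; ring]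
      exact Int.cast_ne_zero.mpr (by simp only at hq; omega)
    exact (mul_eq_zero.mp key).resolve_left hcoef
  -- ===== chunk 2 =====
  set c : ℤ × ℕ →₀ F := L.repr (d₁ (L (1, 0))) with hcdef
  have hsupp : ∀ p : ℤ × ℕ, p ∈ c.support → p.1 + (p.2 : ℤ) = 1 := by
    intro p hp
    by_contra hne
    exact Finsupp.mem_support_iff.mp hp (grading1 1 0 p (by push_cast; omega))
  set w0 : F := - L.repr (d₁ (L (0, 1))) (0, 1) with hw0def
  set lam : F := c (1, 0) + w0 with hlamdef
  set u₂ : B := w0 • L ((0 : ℤ), (0 : ℕ)) +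
      c.sum (fun p q => if p.2 = 0 then 0 else ((-q) / ((p.2 : F) + 1)) • L (p.1 - 1, p.2))
    with hu₂def
  set D : LieDerivation F B B := d₁ - LieDerivation.ad F B u₂ - lam • d₀ with hDdef
  have Dap : ∀ x : B, D x = d₁ x - ⁅u₂, x⁆ - lam • d₀ x := by
    intro x
    rw [hDdef, LieDerivation.sub_apply, LieDerivation.sub_apply, LieDerivation.smul_apply, adap]
  have Dh0 : D (L ((0 : ℤ), (0 : ℕ))) = 0 := by
    rw [Dap, hd₁h, hd₀ 0 0]
    rw [hu₂def, add_lie, smul_lie, lie_self, smul_zero, aux_sum_lie']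
    have hz : (c.sum fun p q =>
        ⁅if p.2 = 0 then (0 : B) else ((-q) / ((p.2 : F) + 1)) • L (p.1 - 1, p.2), L ((0:ℤ), (0:ℕ))⁆)
        = c.sum fun _ _ => (0 : B) := by
      apply Finsupp.sum_congr
      rintro ⟨a, b⟩ hp
      have hab := hsupp _ hp
      simp only at hab
      by_cases hb : b = 0
      · simp [hb]
      · rw [if_neg hb, smul_lie,
          aux_hLc L hL (a - 1) 0 (a - 1) b 0 b 0
            (by rw [show ((a - 1 - 1) * ((0:ℕ) + 1) - (0 - 1) * ((b : ℤ) + 1) : ℤ)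
                  = a + (b : ℤ) - 1 from by push_cast; ring]; omega)
            (by ring) (by omega)]
        simp
    rw [hz, Finsupp.sum_fun_zero]
    simp
  have hd₁t : d₁ (L ((1:ℤ), (0:ℕ))) = c.sum fun p q => q • L p := by
    conv_lhs => rw [← L.linearCombination_repr (d₁ (L (1, 0)))]
    rw [Finsupp.linearCombination_apply, ← hcdef]
  have hbrt : ⁅u₂, L ((1:ℤ), (0:ℕ))⁆
      = -(w0 • L ((1:ℤ), (0:ℕ))) + c.sum fun p q => if p.2 = 0 then 0 else q • L p := by
    rw [hu₂def, add_lie, smul_lie, aux_sum_lie']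
    congr 1
    · rw [aux_hLc L hL 0 1 1 0 0 0 (-1) (by norm_num) (by ring) (by omega)]
      simp
    · apply Finsupp.sum_congr
      rintro ⟨a, b⟩ hp
      have hab := hsupp _ hp
      simp only at hab
      by_cases hb : b = 0
      · simp [hb]
      · rw [if_neg hb, if_neg hb, smul_lie,
          aux_hLc L hL (a - 1) 1 a b 0 b (a - 2) (by push_cast; try ring) (by ring) (by omega)]
        have ha : a = 1 - (b : ℤ) := by omega
        subst ha
        have hbne : ((b : F) + 1) ≠ 0 := Nat.cast_add_one_ne_zero b
        rw [smul_smul, show ((1 - (b:ℤ) - 2 : ℤ) : F) = -((b : F) + 1) from by push_cast; ring]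
        rw [show (-(L.repr (d₁ (L (1, 0))) (1 - (b:ℤ), b)) / ((b : F) + 1)) * -((b : F) + 1)
              = L.repr (d₁ (L (1, 0))) (1 - (b:ℤ), b) * (((b : F) + 1) / ((b : F) + 1)) from by
            ring]
        rw [div_self hbne, mul_one]
  have Dt0 : D (L ((1:ℤ), (0:ℕ))) = 0 := by
    rw [Dap, hbrt, hd₀ 1 0, hd₁t]
    have hsplit : (c.sum fun p q => q • L p)
        = (c.sum fun p q => if p.2 = 0 then q • L p else 0)
          + c.sum fun p q => if p.2 = 0 then 0 else q • L p := by
      rw [← Finsupp.sum_add]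
      apply Finsupp.sum_congr
      intro p hp
      split_ifs <;> simp
    rw [hsplit]
    have hone : (c.sum fun p q => if p.2 = 0 then q • L p else 0)
        = c (1, 0) • L ((1:ℤ), (0:ℕ)) := by
      rw [Finsupp.sum_eq_single ((1:ℤ), (0:ℕ))
        (fun p hfp hpne => ?_) (fun _ => by rw [if_pos rfl, zero_smul])]
      · rw [if_pos rfl]
      · obtain ⟨a, b⟩ := p
        have hab := hsupp _ (Finsupp.mem_support_iff.mpr hfp)
        simp only at hab
        have hb : b ≠ 0 := by
          rintro rfl
          exact hpne (by rw [show a = (1:ℤ) from by omega])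
        rw [if_neg hb]
    rw [hone, hlamdef, show ((1:ℤ):F) = 1 from Int.cast_one, one_smul]
    module
  have DS1 : L.repr (D (L ((0:ℤ), (1:ℕ)))) (0, 1) = 0 := by
    have h1 : L.repr ⁅u₂, L ((0:ℤ), (1:ℕ))⁆ (0, 1) = - w0 := by
      rw [hu₂def, add_lie, smul_lie, aux_sum_lie', map_add, map_smul]
      rw [aux_hLc L hL 0 0 0 0 1 1 (-1) (by norm_num) (by ring) (by omega)]
      rw [Finsupp.add_apply]
      have hs0 : (L.repr (c.sum fun p q =>
          ⁅if p.2 = 0 then (0:B) else ((-q) / ((p.2 : F) + 1)) • L (p.1 - 1, p.2),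
            L ((0:ℤ), (1:ℕ))⁆)) (0, 1) = 0 := by
        rw [map_finsuppSum, Finsupp.sum_apply]
        apply Finsupp.sum_congr (g2 := fun _ _ => (0:F)) ?_ |>.trans (Finsupp.sum_fun_zero _)
        rintro ⟨a, b⟩ hp
        by_cases hb : b = 0
        · simp [hb]
        · rw [if_neg hb, smul_lie,
            aux_hLc L hL (a - 1) 0 (a - 1) b 1 (b + 1) (2*a + b - 3)
              (by push_cast; try ring) (by ring) (by omega)]
          rw [map_smul, map_smul, Module.Basis.repr_self, Finsupp.smul_apply, Finsupp.smul_apply,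
            Finsupp.single_apply, if_neg (by simp only [Prod.mk.injEq]; omega)]
          simp
      rw [hs0, add_zero]
      simp only [map_smul, Finsupp.smul_apply, Module.Basis.repr_self, Finsupp.single_apply, if_pos rfl,
        smul_eq_mul]
      push_cast
      ring
    rw [Dap, hd₀ 0 1]
    simp only [map_sub, Finsupp.sub_apply, h1]
    rw [show ((0:ℤ):F) = 0 from Int.cast_zero, zero_smul, smul_zero]
    simp only [map_zero, Finsupp.zero_apply, hw0def]
    ring
  have gradingD : ∀ (β : ℤ) (j : ℕ) (q : ℤ × ℕ), q.1 + q.2 ≠ β + j →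
      L.repr (D (L (β, j))) q = 0 := by
    rintro β j ⟨q1, q2⟩ hq
    simp only at hq
    rw [Dap]
    simp only [map_sub, map_smul, Finsupp.sub_apply, Finsupp.smul_apply]
    rw [grading1 β j (q1, q2) hq]
    have h2 : L.repr ⁅u₂, L (β, j)⁆ (q1, q2) = 0 := by
      rw [hu₂def, add_lie, smul_lie, aux_sum_lie', map_add, map_smul]
      rw [aux_hLc L hL 0 β β 0 j j (-(β + j)) (by push_cast; try ring) (by ring) (by omega)]
      rw [Finsupp.add_apply]
      have hs0 : (L.repr (c.sum fun p q =>
          ⁅if p.2 = 0 then (0:B) else ((-q) / ((p.2 : F) + 1)) • L (p.1 - 1, p.2),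
            L (β, j)⁆)) (q1, q2) = 0 := by
        rw [map_finsuppSum, Finsupp.sum_apply]
        apply Finsupp.sum_congr (g2 := fun _ _ => (0:F)) ?_ |>.trans (Finsupp.sum_fun_zero _)
        rintro ⟨a, b⟩ hp
        have hab := hsupp _ hp
        simp only at hab
        by_cases hb : b = 0
        · simp [hb]
        · rw [if_neg hb, smul_lie,
            aux_hLc L hL (a - 1) β (a - 1 + β) b j (b + j)
              ((a - 1 - 1) * ((j:ℤ) + 1) - (β - 1) * ((b:ℤ) + 1)) (by push_cast; try ring)
              (by ring) (by omega)]
          rw [map_smul, map_smul, Module.Basis.repr_self, Finsupp.smul_apply, Finsupp.smul_apply,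
            Finsupp.single_apply, if_neg (by
              simp only [Prod.mk.injEq, not_and]
              intro h1 h2
              omega)]
          simp
      rw [hs0, add_zero]
      simp only [map_smul, Finsupp.smul_apply, Module.Basis.repr_self, Finsupp.single_apply,
        if_neg (show ¬((β, j) = (q1, q2)) from by
          simp only [Prod.mk.injEq, not_and]; intro h1 h2; omega)]
      simp
    rw [h2, hd₀ β j]
    simp only [map_smul, Finsupp.smul_apply, Module.Basis.repr_self, Finsupp.single_apply,
      if_neg (show ¬((β, j) = (q1, q2)) from by
        simp only [Prod.mk.injEq, not_and]; intro h1 h2; omega)]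
    simp
  -- ===== chunk 3 =====
  -- generic: apply D to a bracket relation whose left factor is killed by D
  have relA : ∀ (α β δ : ℤ) (j : ℕ) (cc : ℤ),
      ((α - 1) * (j + 1) - (β - 1) * ((0:ℕ) + 1) : ℤ) = cc → α + β = δ →
      D (L (α, 0)) = 0 →
      (cc : F) • D (L (δ, j)) = ⁅L (α, 0), D (L (β, j))⁆ := by
    intro α β δ j cc h1 h2 h0
    have e1 : ⁅L (α, 0), L (β, j)⁆ = (cc : F) • L (δ, j) :=
      aux_hLc L hL α β δ 0 j j cc h1 h2 (by omega)
    have e2 := D.apply_lie_eq_add (L (α, 0)) (L (β, j))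
    rw [e1, h0, zero_lie, add_zero, map_smul] at e2
    exact e2
  have relAc : ∀ (α β δ : ℤ) (j : ℕ) (cc : ℤ),
      ((α - 1) * (j + 1) - (β - 1) * ((0:ℕ) + 1) : ℤ) = cc → α + β = δ →
      D (L (α, 0)) = 0 → ∀ (γ ε : ℤ) (k : ℕ), γ - α = ε →
      (cc : F) * L.repr (D (L (δ, j))) (γ, k)
        = (((α - 1) * (k + 1) - (ε - 1) : ℤ) : F) * L.repr (D (L (β, j))) (ε, k) := by
    intro α β δ j cc h1 h2 h0 γ ε k h3
    have e2 := relA α β δ j cc h1 h2 h0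
    have e3 := congrArg (fun z => L.repr z (γ, k)) e2
    simp only [map_smul, Finsupp.smul_apply, smul_eq_mul] at e3
    rw [aux_BB L hL α γ k, h3] at e3
    exact e3
  have elemz : ∀ (β : ℤ) (j : ℕ),
      (∀ (γ : ℤ) (k : ℕ), γ + k = β + j → L.repr (D (L (β, j))) (γ, k) = 0) →
      D (L (β, j)) = 0 := by
    intro β j hk
    apply aux_elem0 L
    rintro ⟨q1, q2⟩
    by_cases hg : q1 + (q2 : ℤ) = β + j
    · exact hk q1 q2 hg
    · exact gradingD β j (q1, q2) hg
  -- all β ≤ 1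
  have negAll : ∀ n : ℕ, D (L (1 - (n : ℤ), 0)) = 0 := by
    intro n
    induction n with
    | zero => simpa using Dt0
    | succ n ih =>
      have key : ⁅L ((1:ℤ), (0:ℕ)), D (L (-(n:ℤ), 0))⁆ = 0 := by
        have h := relA 1 (-(n:ℤ)) (1 - (n:ℤ)) 0 ((n:ℤ) + 1) (by push_cast; try ring) (by ring) Dt0
        rw [ih] at h
        rw [← h, smul_zero]
      have hmain : D (L (-(n:ℤ), 0)) = 0 := by
        apply elemz
        intro γ k hγk
        obtain rfl : γ = -(n:ℤ) - (k:ℤ) := by omega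
        have e3 := congrArg (fun z => L.repr z (-(n:ℤ) - (k:ℤ) + 1, k)) key
        simp only [map_zero, Finsupp.zero_apply] at e3
        rw [aux_BB L hL 1 (-(n:ℤ) - (k:ℤ) + 1) k] at e3
        rw [show (-(n:ℤ) - (k:ℤ) + 1 - 1 : ℤ) = -(n:ℤ) - (k:ℤ) from by ring] at e3
        rcases mul_eq_zero.mp e3 with h | h
        · exfalso
          rw [Int.cast_eq_zero] at h
          omega
        · exact h
      rw [show (1 - ((n:ℕ) + 1 : ℕ) : ℤ) = -(n:ℤ) from by push_cast; ring]
      exact hmain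
  have negSide : ∀ β : ℤ, β ≤ 1 → D (L (β, 0)) = 0 := by
    intro β hβ
    obtain ⟨n, hn⟩ : ∃ n : ℕ, β = 1 - (n : ℤ) := ⟨(1 - β).toNat, by omega⟩
    rw [hn]; exact negAll n
  -- β = 2
  have D20 : D (L ((2:ℤ), (0:ℕ))) = 0 := by
    apply elemz
    intro γ k hγk
    obtain rfl : γ = 2 - (k:ℤ) := by omega
    rcases Nat.eq_zero_or_pos k with hk | hk
    · -- k = 0 : use ⁅L(2,0), L(-1,0)⁆ = 3 • t
      subst hk
      have e1 : ⁅L ((2:ℤ), (0:ℕ)), L (-1, 0)⁆ = ((3:ℤ) : F) • L (1, 0) :=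
        aux_hLc L hL 2 (-1) 1 0 0 0 3 (by norm_num) (by ring) (by omega)
      have e2 := D.apply_lie_eq_add (L ((2:ℤ), (0:ℕ))) (L (-1, 0))
      rw [e1, negSide (-1) (by norm_num), lie_zero, zero_add, map_smul, Dt0, smul_zero] at e2
      have e2' : ⁅L ((-1:ℤ), (0:ℕ)), D (L (2, 0))⁆ = 0 := by
        rw [← neg_eq_zero, lie_skew]
        exact e2.symm
      have e3 := congrArg (fun z => L.repr z ((2:ℤ) - ((0:ℕ):ℤ) - 1, (0:ℕ))) e2'
      simp only [map_zero, Finsupp.zero_apply] at e3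
      rw [aux_BB L hL (-1) ((2:ℤ) - ((0:ℕ):ℤ) - 1) 0] at e3
      rw [show ((2:ℤ) - ((0:ℕ):ℤ) - 1 - (-1) : ℤ) = 2 - ((0:ℕ):ℤ) from by push_cast; try ring] at e3
      rcases mul_eq_zero.mp e3 with h | h
      · exfalso
        rw [Int.cast_eq_zero] at h
        omega
      · exact h
    · -- k ≥ 1
      have E1 := relAc 1 2 3 0 (-1) (by norm_num) (by ring) Dt0
        (2 - (k:ℤ) + 1) (2 - (k:ℤ)) k (by ring)
      have E2 := relAc (-1) 3 2 0 (-4) (by norm_num) (by ring) (negSide (-1) (by norm_num))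
        (2 - (k:ℤ)) (2 - (k:ℤ) + 1) k (by ring)
      set r2 := L.repr (D (L ((2:ℤ), (0:ℕ)))) (2 - (k:ℤ), k) with hr2
      set r3 := L.repr (D (L ((3:ℤ), (0:ℕ)))) (2 - (k:ℤ) + 1, k) with hr3
      push_cast at E1 E2
      have key : ((k:F)^2 + 3*(k:F)) * r2 = 0 := by
        linear_combination (-(k:F) - 4) * E1 - E2
      have hc : ((k:F)^2 + 3*(k:F)) ≠ 0 := by
        rw [show ((k:F)^2 + 3*(k:F)) = ((k^2 + 3*k : ℕ) : F) from by push_cast; ring]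
        exact Nat.cast_ne_zero.mpr (by nlinarith [hk])
      exact (mul_eq_zero.mp key).resolve_left hc
  -- all β ≥ 2
  have posAll : ∀ n : ℕ, D (L (2 + (n : ℤ), 0)) = 0 := by
    intro n
    induction n with
    | zero => simpa using D20
    | succ n ih =>
      have hrel := relA 1 (2 + (n:ℤ)) (3 + (n:ℤ)) 0 (-((n:ℤ) + 1)) (by push_cast; try ring)
        (by ring) Dt0
      rw [ih, lie_zero] at hrel
      have hc : ((-((n:ℤ) + 1) : ℤ) : F) ≠ 0 := Int.cast_ne_zero.mpr (by omega)
      have hz := (smul_eq_zero.mp hrel).resolve_left hc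
      rw [show (2 + ((n:ℕ) + 1 : ℕ) : ℤ) = 3 + (n:ℤ) from by push_cast; ring]
      exact hz
  have W0 : ∀ β : ℤ, D (L (β, 0)) = 0 := by
    intro β
    rcases le_or_gt β 1 with hβ | hβ
    · exact negSide β hβ
    · obtain ⟨n, hn⟩ : ∃ n : ℕ, β = 2 + (n : ℤ) := ⟨(β - 2).toNat, by omega⟩
      rw [hn]; exact posAll n
  -- the A relation : (2β-1) • D (L (β,1)) = ⁅L (β,0), D (L (0,1))⁆
  have relAs : ∀ β : ℤ, ((2*β - 1 : ℤ) : F) • D (L (β, 1)) = ⁅L (β, 0), D (L ((0:ℤ), (1:ℕ)))⁆ := by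
    intro β
    have := relA β 0 β 1 (2*β - 1) (by push_cast; try ring) (by ring) (W0 β)
    exact this
  -- D s = 0
  have Ds0 : D (L ((0:ℤ), (1:ℕ))) = 0 := by
    apply elemz
    intro γ m hγm
    obtain rfl : γ = 1 - (m:ℤ) := by omega
    rcases eq_or_ne m 1 with hm | hm
    · subst hm
      rw [show ((1:ℤ) - ((1:ℕ):ℤ) : ℤ) = 0 from by norm_num]
      exact DS1
    · have A1 := relAc 1 0 1 1 1 (by push_cast; try ring) (by ring) Dt0
        (1 - (m:ℤ) + 1) (1 - (m:ℤ)) m (by ring)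
      have A3 := relAc 3 0 3 1 5 (by push_cast; try ring) (by ring) (W0 3)
        (1 - (m:ℤ) + 3) (1 - (m:ℤ)) m (by ring)
      have B2 := relAc 2 1 3 1 2 (by push_cast; try ring) (by ring) (W0 2)
        (1 - (m:ℤ) + 3) (1 - (m:ℤ) + 1) m (by ring)
      set Em := L.repr (D (L ((0:ℤ), (1:ℕ)))) (1 - (m:ℤ), m) with hEm
      set r11 := L.repr (D (L ((1:ℤ), (1:ℕ)))) (1 - (m:ℤ) + 1, m) with hr11
      set r31 := L.repr (D (L ((3:ℤ), (1:ℕ)))) (1 - (m:ℤ) + 3, m) with hr31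
      push_cast at A1 A3 B2
      have hfact : ((5:F)*(m:F)^2 - 3*(m:F) - 2) * Em = 0 := by
        linear_combination (-5*(m:F)) * A1 - (5/2) * B2 + A3
      have hc : ((5:F)*(m:F)^2 - 3*(m:F) - 2) ≠ 0 := by
        rw [show ((5:F)*(m:F)^2 - 3*(m:F) - 2) = (((5*(m:ℤ) + 2) * ((m:ℤ) - 1) : ℤ) : F) from by
          push_cast; ring]
        apply Int.cast_ne_zero.mpr
        apply mul_ne_zero
        · omega
        · have : (m:ℤ) ≠ 1 := by exact_mod_cast fun h => hm (by exact_mod_cast h)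
          omega
      exact (mul_eq_zero.mp hfact).resolve_left hc
  -- all D (L (β,1)) = 0
  have Wall1 : ∀ β : ℤ, D (L (β, 1)) = 0 := by
    intro β
    have h := relAs β
    rw [Ds0, lie_zero] at h
    have hc : ((2*β - 1 : ℤ) : F) ≠ 0 := Int.cast_ne_zero.mpr (by omega)
    exact (smul_eq_zero.mp h).resolve_left hc
  -- induction on j
  have jAll : ∀ (j : ℕ) (β : ℤ), D (L (β, j)) = 0 := by
    intro j
    induction j with
    | zero => exact W0
    | succ j ih =>
      intro δ
      -- relation 1 : ⁅L(δ,j), L(0,1)⁆ = (2δ+j-1) • L (δ, j+1)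
      have e1 : ⁅L (δ, j), L ((0:ℤ), (1:ℕ))⁆ = ((2*δ + j - 1 : ℤ) : F) • L (δ, j + 1) :=
        aux_hLc L hL δ 0 δ j 1 (j+1) (2*δ + j - 1) (by push_cast; try ring) (by ring) (by omega)
      have r1 := D.apply_lie_eq_add (L (δ, j)) (L ((0:ℤ), (1:ℕ)))
      rw [e1, ih δ, zero_lie, Ds0, lie_zero, add_zero, map_smul] at r1
      -- r1 : (2δ+j-1) • D (L (δ, j+1)) = 0
      have e2 : ⁅L (δ - 2, j), L ((2:ℤ), (1:ℕ))⁆ = ((2*δ - j - 7 : ℤ) : F) • L (δ, j + 1) :=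
        aux_hLc L hL (δ - 2) 2 δ j 1 (j+1) (2*δ - j - 7) (by push_cast; try ring) (by ring) (by omega)
      have r2 := D.apply_lie_eq_add (L (δ - 2, j)) (L ((2:ℤ), (1:ℕ)))
      rw [e2, ih (δ - 2), zero_lie, Wall1 2, lie_zero, add_zero, map_smul] at r2
      by_cases hδ : 2*δ + (j:ℤ) - 1 = 0
      · have hc : ((2*δ - j - 7 : ℤ) : F) ≠ 0 := Int.cast_ne_zero.mpr (by omega)
        exact (smul_eq_zero.mp r2).resolve_left hc
      · have hc : ((2*δ + j - 1 : ℤ) : F) ≠ 0 := Int.cast_ne_zero.mpr (by omega)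
        exact (smul_eq_zero.mp r1).resolve_left hc
  -- D = 0
  have Dzero : ∀ x : B, D x = 0 := by
    have hlin : (D : B →ₗ[F] B) = 0 := by
      apply L.ext
      rintro ⟨β, j⟩
      simpa using jAll j β
    intro x
    have := LinearMap.congr_fun hlin x
    simpa using this
  -- final assembly
  refine ⟨u₁ + u₂, lam, fun x => ?_⟩
  have h1 : d x = d₁ x + ⁅u₁, x⁆ := by rw [d₁ap]; abel
  have h2 : d₁ x = D x + ⁅u₂, x⁆ + lam • d₀ x := by rw [Dap]; abel
  rw [h1, h2, Dzero x, add_lie u₁ u₂ x]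
  module
end

section
/- (Theorem 2.1, cohomology part) The quotient of the F-vector space of derivations of B by the subspace of inner derivations is one-dimensional; in other words, the first cohomology group H¹(B;B) of B with coefficients in its adjoint module has dimension 1, spanned by the class of d₀. -/
section Block
set_option linter.unusedSectionVars false
variable {F : Type*} [Field F] [CharZero F]
    {B : Type*} [LieRing B] [LieAlgebra F B]
    (L : Module.Basis (ℤ × ℕ) F B)
    (hL : ∀ (α β : ℤ) (i j : ℕ),
      ⁅L (α, i), L (β, j)⁆ =
        (((α - 1) * (j + 1) - (β - 1) * (i + 1) : ℤ) : F) • L (α + β, i + j))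

/-- structure constant -/
def KK (p q : ℤ × ℕ) : ℤ := (p.1 - 1) * (q.2 + 1) - (q.1 - 1) * (p.2 + 1)

/-- the linear functional x ↦ repr ⁅x, L q⁆ r -/
noncomputable def brF (q r : ℤ × ℕ) : B →ₗ[F] F where
  toFun x := L.repr ⁅x, L q⁆ r
  map_add' x y := by simp [add_lie]
  map_smul' c x := by simp [smul_lie]

lemma brF_apply (q r : ℤ × ℕ) (x : B) : brF L q r x = L.repr ⁅x, L q⁆ r := rfl

include hL in
lemma br1 (q p' : ℤ × ℕ) (x : B) :
    L.repr ⁅x, L q⁆ (p'.1 + q.1, p'.2 + q.2) = (KK p' q : F) * L.repr x p' := by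
  have h : brF L q (p'.1 + q.1, p'.2 + q.2)
      = (KK p' q : F) • (Finsupp.lapply p' ∘ₗ (L.repr : B →ₗ[F] (ℤ × ℕ →₀ F))) := by
    apply L.ext
    intro p
    simp only [brF_apply, LinearMap.smul_apply, LinearMap.coe_comp, Function.comp_apply,
      Finsupp.lapply_apply, LinearEquiv.coe_coe, Module.Basis.repr_self, smul_eq_mul]
    rw [hL p.1 q.1 p.2 q.2, map_smul, Module.Basis.repr_self]
    by_cases hp : p = p'
    · subst hp; simp [KK]
    · rw [Finsupp.smul_apply, Finsupp.single_apply, Finsupp.single_apply, if_neg, if_neg]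
      · simp
      · exact hp
      · intro h
        apply hp
        have h1 : p.1 + q.1 = p'.1 + q.1 := congrArg Prod.fst h
        have h2 : p.2 + q.2 = p'.2 + q.2 := congrArg Prod.snd h
        exact Prod.ext (by omega) (by omega)
  have := congrArg (fun f => f x) h
  simpa [brF_apply] using this

include hL in
lemma br2 (q r : ℤ × ℕ) (hr : r.2 < q.2) (x : B) :
    L.repr ⁅x, L q⁆ r = 0 := by
  have h : brF L q r = 0 := by
    apply L.ext
    intro p
    simp only [brF_apply, LinearMap.zero_apply]
    rw [hL p.1 q.1 p.2 q.2, map_smul, Module.Basis.repr_self, Finsupp.smul_single]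
    rw [Finsupp.single_apply, if_neg]
    intro h
    have : p.2 + q.2 = r.2 := congrArg Prod.snd h
    omega
  have := congrArg (fun f => f x) h
  simpa [brF_apply] using this


include hL in
lemma leib (E : LieDerivation F B B) (p q r : ℤ × ℕ) :
    (KK p q : F) * L.repr (E (L (p.1 + q.1, p.2 + q.2))) r
      = L.repr ⁅E (L p), L q⁆ r - L.repr ⁅E (L q), L p⁆ r := by
  have h0 := E.apply_lie_eq_add (L p) (L q)
  rw [hL p.1 q.1 p.2 q.2, map_smul] at h0
  have hsk : ⁅L p, E (L q)⁆ = -⁅E (L q), L p⁆ := by rw [← lie_skew]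
  rw [hsk] at h0
  have h1 := congrArg (fun v => L.repr v r) h0
  simp only [map_smul, map_add, map_neg, Finsupp.smul_apply, Finsupp.add_apply,
    Finsupp.neg_apply, smul_eq_mul] at h1
  rw [show ((((p.1 - 1) * (q.2 + 1) - (q.1 - 1) * (p.2 + 1) : ℤ)) : F) = (KK p q : F) from rfl] at h1
  linear_combination h1

omit hL

lemma mk_repr (ψ : ℤ × ℕ → ℤ × ℕ) (hψ : Function.Injective ψ) (φ : ℤ × ℕ → F) (x : B)
    (r : ℤ × ℕ) :
    L.repr ((L.repr x).sum fun p c => (φ p * c) • L (ψ p)) (ψ r) = φ r * L.repr x r := by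
  rw [map_finsuppSum, Finsupp.sum_apply, Finsupp.sum_eq_single r]
  · simp
  · intro p hp hpr
    simp only [map_smul, Module.Basis.repr_self, Finsupp.smul_single, smul_eq_mul, mul_one]
    rw [Finsupp.single_apply, if_neg]
    exact fun h => hpr (hψ h)
  · simp

include hL in
lemma d0_not_inner (d₀ : LieDerivation F B B)
    (hd₀ : ∀ (β : ℤ) (j : ℕ), d₀ (L (β, j)) = (β : F) • L (β, j)) (u : B) :
    LieDerivation.ad F B u ≠ d₀ := by
  intro hu
  have had : ∀ x : B, ⁅u, x⁆ = d₀ x := by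
    intro x
    have := LieDerivation.congr_fun hu x
    simpa using this
  have h1 : ⁅u, L (1, 0)⁆ = L (1, 0) := by rw [had, hd₀ 1 0]; simp
  have h2 : ⁅u, L ((0 : ℤ), 1)⁆ = 0 := by rw [had, hd₀ 0 1]; simp
  have e1 : (KK (0, 0) (1, 0) : F) * L.repr u (0, 0) = 1 := by
    have := br1 L hL (1, 0) (0, 0) u
    rw [h1] at this
    simpa using this.symm
  have e2 : (KK (0, 0) ((0 : ℤ), 1) : F) * L.repr u (0, 0) = 0 := by
    have := br1 L hL ((0 : ℤ), 1) (0, 0) u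
    rw [h2] at this
    simpa using this.symm
  have k1 : (KK (0, 0) (1, 0) : ℤ) = -1 := by norm_num [KK]
  have k2 : (KK (0, 0) ((0 : ℤ), 1) : ℤ) = -1 := by norm_num [KK]
  rw [k1] at e1
  rw [k2] at e2
  rw [e2] at e1
  exact one_ne_zero e1.symm


omit hL in
lemma reprzero (x : B) (h : ∀ r : ℤ × ℕ, L.repr x r = 0) : x = 0 := by
  have h0 : L.repr x = 0 := Finsupp.ext h
  exact (LinearEquiv.map_eq_zero_iff L.repr).mp h0

include hL in
lemma brdeg (u : B) (hu : ∀ s : ℤ × ℕ, (s.1 + s.2 : ℤ) ≠ 0 → L.repr u s = 0)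
    (p r : ℤ × ℕ) (hr : (r.1 + r.2 : ℤ) ≠ (p.1 + p.2 : ℤ)) : L.repr ⁅u, L p⁆ r = 0 := by
  by_cases h2 : r.2 < p.2
  · exact br2 L hL p r h2 u
  · push_neg at h2
    have hre : r = ((r.1 - p.1) + p.1, (r.2 - p.2) + p.2) := by
      apply Prod.ext <;> simp <;> omega
    rw [hre, br1 L hL p (r.1 - p.1, r.2 - p.2) u, hu, mul_zero]
    have hc : ((r.2 - p.2 : ℕ) : ℤ) = (r.2 : ℤ) - (p.2 : ℤ) := by
      exact_mod_cast Int.ofNat_sub h2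
    simp only [hc]
    intro hcon
    apply hr
    omega


include hL in
lemma hG (E : LieDerivation F B B) (p r : ℤ × ℕ) :
    L.repr ⁅E (L ((0:ℤ), 0)), L p⁆ r
      = ((r.1 + r.2 - p.1 - p.2 : ℤ) : F) * L.repr (E (L p)) r := by
  have h := leib L hL E p ((0:ℤ), 0) r
  rw [show ((p.1 + (0:ℤ), p.2 + 0) : ℤ × ℕ) = p by simp] at h
  have h2 := br1 L hL ((0:ℤ), 0) r (E (L p))
  rw [show ((r.1 + (0:ℤ), r.2 + 0) : ℤ × ℕ) = r by simp] at h2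
  rw [h2] at h
  have k1 : (KK p ((0:ℤ), 0) : ℤ) = p.1 + p.2 := by simp [KK]; ring
  have k2 : (KK r ((0:ℤ), 0) : ℤ) = r.1 + r.2 := by simp [KK]; ring
  rw [k1, k2] at h
  push_cast at h ⊢
  linear_combination h


omit hL in
lemma hzero (x : B) (p : ℤ × ℕ)
    (hgrx : ∀ r : ℤ × ℕ, (r.1 + r.2 : ℤ) ≠ (p.1 + p.2 : ℤ) → L.repr x r = 0)
    (hk : ∀ k : ℕ, L.repr x (p.1 + p.2 - k, k) = 0) : x = 0 := by
  apply reprzero L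
  intro r
  by_cases hd : (r.1 + r.2 : ℤ) = (p.1 + p.2 : ℤ)
  · have hre : r = (p.1 + p.2 - r.2, r.2) := Prod.ext (by omega) rfl
    rw [hre]
    exact hk r.2
  · exact hgrx r hd

include hL in
lemma hstar (E : LieDerivation F B B) (h10 : E (L ((1 : ℤ), 0)) = 0) (β : ℤ) (j k : ℕ) :
    ((1 - β : ℤ) : F) * L.repr (E (L (β + 1, j))) (β + 1 + j - k, k)
      = ((1 + k - β - j : ℤ) : F) * L.repr (E (L (β, j))) (β + j - k, k) := by
  have h := leib L hL E ((1 : ℤ), 0) (β, j) (β + 1 + j - k, k)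
  rw [h10] at h
  simp only [zero_lie, map_zero, Finsupp.coe_zero, Pi.zero_apply, zero_sub] at h
  have hb := br1 L hL ((1 : ℤ), 0) (β + j - k, k) (E (L (β, j)))
  rw [show (((β + j - k : ℤ) + 1, k + 0) : ℤ × ℕ) = (β + 1 + j - k, k) from
    Prod.ext (by ring) (by simp)] at hb
  rw [hb] at h
  rw [show ((1 + β, 0 + j) : ℤ × ℕ) = (β + 1, j) from Prod.ext (by ring) (by simp)] at h
  rw [show (KK ((1 : ℤ), 0) (β, j) : ℤ) = 1 - β by simp [KK],
    show (KK ((β + j - k : ℤ), k) ((1 : ℤ), 0) : ℤ) = β + j - k - 1 by simp [KK]] at h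
  push_cast at h ⊢
  linear_combination h

include hL in
lemma rowzero (E : LieDerivation F B B) (h00 : E (L ((0 : ℤ), 0)) = 0)
    (h10 : E (L ((1 : ℤ), 0)) = 0)
    (hgrE : ∀ p r : ℤ × ℕ, (r.1 + r.2 : ℤ) ≠ (p.1 + p.2 : ℤ) → L.repr (E (L p)) r = 0) :
    ∀ β : ℤ, E (L (β, 0)) = 0 := by
  have hlow : ∀ n : ℕ, ∀ k : ℕ, L.repr (E (L (1 - n, 0))) (1 - n - k, k) = 0 := by
    intro n
    induction n with
    | zero => intro k; simp [h10]
    | succ n ih =>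
      intro k
      have hs := hstar L hL E h10 (1 - n - 1) 0 k
      simp only [Nat.cast_zero, add_zero, sub_zero] at hs
      rw [show ((1 : ℤ) - n - 1 + 1) = 1 - n by ring] at hs
      rw [ih k, mul_zero] at hs
      have hc : ((1 + k - (1 - n - 1) : ℤ) : F) ≠ 0 := by
        rw [Int.cast_ne_zero]; omega
      have hres := (mul_eq_zero.mp hs.symm).resolve_left hc
      rw [show ((1 : ℤ) - ((n + 1 : ℕ) : ℤ), (0 : ℕ)) = ((1 : ℤ) - (n : ℕ) - 1, (0 : ℕ)) from
        Prod.ext (by push_cast; ring) rfl,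
        show ((1 : ℤ) - ((n + 1 : ℕ) : ℤ) - k, k) = ((1 : ℤ) - (n : ℕ) - 1 - k, k) from
        Prod.ext (by push_cast; ring) rfl]
      exact hres
  have hm1 : E (L ((-1 : ℤ), 0)) = 0 := by
    apply hzero L _ ((-1 : ℤ), 0) (fun r hr => hgrE _ r (by simpa using hr))
    intro k
    have := hlow 2 k
    rw [show ((1 : ℤ) - (2 : ℕ) - k, k) = ((-1 : ℤ) + (0 : ℕ) - k, k) from
      Prod.ext (by push_cast; ring) rfl] at this
    exact this
  have h20 : ∀ k : ℕ, L.repr (E (L ((2 : ℤ), 0))) (2 - k, k) = 0 := by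
    intro k
    have h := leib L hL E ((2 : ℤ), 0) ((-1 : ℤ), 0) (1 - k, k)
    rw [hm1] at h
    simp only [zero_lie, map_zero, Finsupp.coe_zero, Pi.zero_apply, sub_zero] at h
    rw [show (((2 : ℤ) + -1, (0 : ℕ) + 0) : ℤ × ℕ) = ((1 : ℤ), 0) from
      Prod.ext (by ring) rfl, h10] at h
    simp only [map_zero, Finsupp.coe_zero, Pi.zero_apply, mul_zero] at h
    have hb := br1 L hL ((-1 : ℤ), 0) ((2 - k : ℤ), k) (E (L ((2 : ℤ), 0)))
    rw [show (((2 - k : ℤ) + -1, k + 0) : ℤ × ℕ) = ((1 - k : ℤ), k) from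
      Prod.ext (by ring) (by simp)] at hb
    rw [hb] at h
    have hc : ((KK ((2 - k : ℤ), k) ((-1 : ℤ), 0) : ℤ) : F) ≠ 0 := by
      rw [Int.cast_ne_zero]
      simp only [KK]
      push_cast
      omega
    have := (mul_eq_zero.mp h.symm).resolve_left hc
    rwa [show (((2 : ℤ) - k, k) : ℤ × ℕ) = ((2 - k : ℤ), k) from rfl]
  have hup : ∀ n : ℕ, ∀ k : ℕ, L.repr (E (L (2 + n, 0))) (2 + n - k, k) = 0 := by
    intro n
    induction n with
    | zero => intro k; simpa using h20 k
    | succ n ih =>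
      intro k
      have hs := hstar L hL E h10 (2 + n) 0 k
      simp only [Nat.cast_zero, add_zero, sub_zero] at hs
      rw [ih k, mul_zero] at hs
      have hc : ((1 - (2 + n) : ℤ) : F) ≠ 0 := by rw [Int.cast_ne_zero]; omega
      have hres := (mul_eq_zero.mp hs).resolve_left hc
      rw [show ((2 : ℤ) + ((n + 1 : ℕ) : ℤ), (0 : ℕ)) = ((2 : ℤ) + (n : ℕ) + 1, (0 : ℕ)) from
        Prod.ext (by push_cast; ring) rfl,
        show ((2 : ℤ) + ((n + 1 : ℕ) : ℤ) - k, k) = ((2 : ℤ) + (n : ℕ) + 1 - k, k) from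
        Prod.ext (by push_cast; ring) rfl]
      exact hres
  intro β
  apply hzero L _ (β, 0) (fun r hr => hgrE _ r (by simpa using hr))
  intro k
  rcases le_or_gt β 1 with hb | hb
  · have := hlow (1 - β).toNat k
    rw [show ((1 : ℤ) - (1 - β).toNat, (0 : ℕ)) = ((β : ℤ), 0) from
      Prod.ext (by omega) rfl] at this
    rw [show ((1 : ℤ) - (1 - β).toNat - k, k) = ((β : ℤ) + (0 : ℕ) - k, k) from
      Prod.ext (by omega) rfl] at this
    exact this
  · have := hup (β - 2).toNat k
    rw [show ((2 : ℤ) + (β - 2).toNat, (0 : ℕ)) = ((β : ℤ), 0) from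
      Prod.ext (by omega) rfl] at this
    rw [show ((2 : ℤ) + (β - 2).toNat - k, k) = ((β : ℤ) + (0 : ℕ) - k, k) from
      Prod.ext (by omega) rfl] at this
    exact this

include hL in
lemma classification (d₀ : LieDerivation F B B)
    (hd₀ : ∀ (β : ℤ) (j : ℕ), d₀ (L (β, j)) = (β : F) • L (β, j))
    (D : LieDerivation F B B) :
    ∃ (c : F) (u : B), D = c • d₀ + LieDerivation.ad F B u := by
  classical
  set x₀ := D (L ((0 : ℤ), 0)) with hx₀
  set φ₁ : ℤ × ℕ → F := fun p => if (p.1 + p.2 : ℤ) = 0 then 0 else ((p.1 + p.2 : ℤ) : F)⁻¹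
    with hφ₁
  set u₁ : B := (L.repr x₀).sum fun p c => (φ₁ p * c) • L (id p) with hu₁
  have hu₁r : ∀ r : ℤ × ℕ, L.repr u₁ r = φ₁ r * L.repr x₀ r :=
    fun r => mk_repr L id (fun a b h => h) φ₁ x₀ r
  set E := D - LieDerivation.ad F B u₁ with hEdef
  have hE : ∀ x : B, E x = D x - ⁅u₁, x⁆ := by
    intro x
    simp [hEdef]
  -- Step 2/3 : E kills L (0,0)
  have hEh : E (L ((0 : ℤ), 0)) = 0 := by
    apply reprzero L
    intro r
    by_cases hdeg : (r.1 + r.2 : ℤ) = 0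
    · -- centrality argument
      have h0 : L.repr ⁅E (L ((0 : ℤ), 0)), L ((1 : ℤ), 0)⁆ (r.1 + 1, r.2) = 0 := by
        rw [hG L hL E ((1 : ℤ), 0) (r.1 + 1, r.2)]
        apply mul_eq_zero_of_left
        rw [Int.cast_eq_zero]
        push_cast
        omega
      have hb := br1 L hL ((1 : ℤ), 0) r (E (L ((0 : ℤ), 0)))
      have hidx : ((r.1 + (1 : ℤ), r.2 + 0) : ℤ × ℕ) = (r.1 + 1, r.2) := by simp
      rw [hidx, h0] at hb
      have hk : KK r ((1 : ℤ), 0) = r.1 - 1 := by simp [KK]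
      have hc : ((KK r ((1 : ℤ), 0) : ℤ) : F) ≠ 0 := by
        rw [Int.cast_ne_zero, hk]
        omega
      exact ((mul_eq_zero.mp hb.symm).resolve_left hc)
    · -- degree ≠ 0 : explicit cancellation
      have hr0 : L.repr (E (L ((0 : ℤ), 0))) r = L.repr x₀ r - L.repr ⁅u₁, L ((0 : ℤ), 0)⁆ r := by
        rw [hE]
        simp only [map_sub, Finsupp.sub_apply, hx₀]
      have hb := br1 L hL ((0 : ℤ), 0) r u₁
      rw [show ((r.1 + (0 : ℤ), r.2 + 0) : ℤ × ℕ) = r by simp] at hb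
      have k2 : (KK r ((0 : ℤ), 0) : ℤ) = r.1 + r.2 := by simp [KK]; ring
      rw [k2] at hb
      rw [hr0, hb, hu₁r r, hφ₁]
      simp only [if_neg hdeg]
      have hcz : ((r.1 + r.2 : ℤ) : F) ≠ 0 := Int.cast_ne_zero.mpr hdeg
      push_cast at hcz ⊢
      field_simp
      ring
  -- Step 4 : E is graded
  have hgr : ∀ p r : ℤ × ℕ, (r.1 + r.2 : ℤ) ≠ (p.1 + p.2 : ℤ) → L.repr (E (L p)) r = 0 := by
    intro p r hne
    have hg := hG L hL E p r
    rw [hEh] at hg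
    simp only [zero_lie, map_zero, Finsupp.coe_zero, Pi.zero_apply] at hg
    have hc : ((r.1 + r.2 - p.1 - p.2 : ℤ) : F) ≠ 0 := by
      rw [Int.cast_ne_zero]
      omega
    exact (mul_eq_zero.mp hg.symm).resolve_left hc
  -- Step 5 : adjust on L (1,0)
  set x₁ := E (L ((1 : ℤ), 0)) with hx₁
  set φ₂ : ℤ × ℕ → F := fun p => if p.1 = 2 then 0 else ((p.1 - 2 : ℤ) : F)⁻¹ with hφ₂
  set ψ₂ : ℤ × ℕ → ℤ × ℕ := fun p => (p.1 - 1, p.2) with hψ₂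
  have hψ₂i : Function.Injective ψ₂ := by
    intro a b h
    have h1 := congrArg Prod.fst h
    have h2 := congrArg Prod.snd h
    simp only [hψ₂] at h1 h2
    exact Prod.ext (by omega) h2
  set u₂ : B := (L.repr x₁).sum fun p c => (φ₂ p * c) • L (ψ₂ p) with hu₂
  have hu₂r' : ∀ s : ℤ × ℕ, L.repr u₂ s = φ₂ (s.1 + 1, s.2) * L.repr x₁ (s.1 + 1, s.2) := by
    intro s
    have h := mk_repr L ψ₂ hψ₂i φ₂ x₁ (s.1 + 1, s.2)
    rw [show ψ₂ (s.1 + 1, s.2) = s by simp [hψ₂]] at h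
    exact h
  have hu₂deg : ∀ s : ℤ × ℕ, (s.1 + s.2 : ℤ) ≠ 0 → L.repr u₂ s = 0 := by
    intro s hs
    rw [hu₂r', hx₁, hgr ((1 : ℤ), 0) (s.1 + 1, s.2) (by push_cast; omega), mul_zero]
  set E' := E - LieDerivation.ad F B u₂ with hE'def
  have hE' : ∀ x : B, E' x = E x - ⁅u₂, x⁆ := by intro x; simp [hE'def]
  have hgr' : ∀ p r : ℤ × ℕ, (r.1 + r.2 : ℤ) ≠ (p.1 + p.2 : ℤ) → L.repr (E' (L p)) r = 0 := by
    intro p r h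
    rw [hE']
    simp only [map_sub, Finsupp.sub_apply]
    rw [hgr p r h, brdeg L hL u₂ hu₂deg p r h, sub_zero]
  have hE'h : E' (L ((0 : ℤ), 0)) = 0 := by
    apply reprzero L
    intro r
    rw [hE']
    simp only [map_sub, Finsupp.sub_apply]
    rw [hEh]
    simp only [map_zero, Finsupp.coe_zero, Pi.zero_apply, zero_sub, neg_eq_zero]
    by_cases hdeg : (r.1 + r.2 : ℤ) = 0
    · have hb := br1 L hL ((0 : ℤ), 0) r u₂
      rw [show ((r.1 + (0 : ℤ), r.2 + 0) : ℤ × ℕ) = r by simp] at hb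
      rw [hb, show (KK r ((0 : ℤ), 0) : ℤ) = r.1 + r.2 by simp [KK]; ring, hdeg]
      simp
    · exact brdeg L hL u₂ hu₂deg ((0 : ℤ), 0) r (by push_cast; omega)
  have hE'10 : E' (L ((1 : ℤ), 0)) = 0 := by
    apply reprzero L
    intro r
    rw [hE']
    simp only [map_sub, Finsupp.sub_apply]
    rw [← hx₁]
    have hb := br1 L hL ((1 : ℤ), 0) (r.1 - 1, r.2) u₂
    rw [show (((r.1 - 1 : ℤ) + 1, r.2 + 0) : ℤ × ℕ) = r by simp] at hb
    rw [hb, hu₂r' (r.1 - 1, r.2)]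
    rw [show (((r.1 - 1 : ℤ) + 1, ((r.1 - 1 : ℤ), r.2).2) : ℤ × ℕ) = r by simp]
    rw [show KK ((r.1 - 1 : ℤ), r.2) ((1 : ℤ), 0) = r.1 - 2 by simp [KK]; ring]
    rw [hφ₂]
    by_cases h2 : r.1 = 2
    · have hz : L.repr x₁ r = 0 := by
        rw [hx₁]
        exact hgr ((1 : ℤ), 0) r (by push_cast; omega)
      rw [hz]
      simp
    · simp only [if_neg h2]
      have hnz : ((r.1 - 2 : ℤ) : F) ≠ 0 := by rw [Int.cast_ne_zero]; omega
      push_cast at hnz ⊢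
      field_simp
      ring
  -- Step 6 : E' on L (0,1)
  have hrow' : ∀ β : ℤ, E' (L (β, 0)) = 0 := rowzero L hL E' hE'h hE'10 hgr'
  have hF1 : ∀ (β : ℤ) (k : ℕ),
      ((2 * β - 1 : ℤ) : F) * L.repr (E' (L (β, 1))) (β + 1 - k, k)
        = -(((KK ((1 - k : ℤ), k) (β, 0)) : ℤ) : F)
            * L.repr (E' (L ((0 : ℤ), 1))) (1 - k, k) := by
    intro β k
    have h := leib L hL E' (β, 0) ((0 : ℤ), 1) (β + 1 - k, k)
    rw [hrow' β] at h
    simp only [zero_lie, map_zero, Finsupp.coe_zero, Pi.zero_apply, zero_sub] at h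
    have hb := br1 L hL (β, 0) ((1 - k : ℤ), k) (E' (L ((0 : ℤ), 1)))
    rw [show (((1 - k : ℤ) + β, k + 0) : ℤ × ℕ) = ((β + 1 - k : ℤ), k) from
      Prod.ext (by ring) (by simp)] at hb
    rw [hb] at h
    rw [show ((β + (0 : ℤ), (0 : ℕ) + 1) : ℤ × ℕ) = ((β : ℤ), 1) from
      Prod.ext (by ring) rfl] at h
    rw [show (KK (β, 0) ((0 : ℤ), 1) : ℤ) = 2 * β - 1 by simp [KK]; ring] at h
    rw [h]
    ring
  have gvanish : ∀ k : ℕ, k ≠ 1 → L.repr (E' (L ((0 : ℤ), 1))) (1 - k, k) = 0 := by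
    intro k hk
    by_cases hk0 : k = 0
    · subst hk0
      have hA := hF1 2 0
      have hB := hF1 3 0
      have hC := hstar L hL E' hE'10 2 1 0
      norm_num [KK] at hA hB hC ⊢
      linear_combination (-5/2 : F) * hA + (3/4 : F) * hB + (-15/4 : F) * hC
    · have hA := hF1 1 k
      rw [show (KK ((1 - k : ℤ), k) ((1 : ℤ), 0) : ℤ) = -k by simp [KK]] at hA
      have hB := hstar L hL E' hE'10 1 1 k
      rw [show ((1 : ℤ) + ((1 : ℕ) : ℤ) - (k : ℤ), k) = ((1 : ℤ) + 1 - (k : ℤ), k) from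
        Prod.ext (by push_cast; ring) rfl] at hB
      rw [show ((1 - 1 : ℤ) : F) = 0 from by norm_num, zero_mul] at hB
      have hA' : L.repr (E' (L (1, 1))) (1 + 1 - (k : ℤ), k)
          = ((k : ℤ) : F) * L.repr (E' (L ((0 : ℤ), 1))) (1 - k, k) := by
        rw [show ((2 * 1 - 1 : ℤ) : F) = 1 from by norm_num, one_mul] at hA
        rw [hA]
        push_cast
        ring
      rw [hA'] at hB
      have hc1 : ((1 + (k : ℤ) - 1 - ((1 : ℕ) : ℤ) : ℤ) : F) ≠ 0 := by
        rw [Int.cast_ne_zero]; omega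
      have hc2 : (((k : ℤ)) : F) ≠ 0 := by rw [Int.cast_ne_zero]; omega
      rcases mul_eq_zero.mp hB.symm with h | h
      · exact absurd h hc1
      · rcases mul_eq_zero.mp h with h' | h'
        · exact absurd h' hc2
        · exact h'
  set c : F := L.repr (E' (L ((0 : ℤ), 1))) ((0 : ℤ), 1) with hc
  have hE'01 : E' (L ((0 : ℤ), 1)) = c • L ((0 : ℤ), 1) := by
    have hdiff : E' (L ((0 : ℤ), 1)) - c • L ((0 : ℤ), 1) = 0 := by
      apply reprzero L
      intro r
      simp only [map_sub, map_smul, Finsupp.sub_apply, Finsupp.smul_apply, Module.Basis.repr_self,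
        smul_eq_mul]
      by_cases hd : (r.1 + r.2 : ℤ) = 1
      · by_cases hr1 : r = ((0 : ℤ), 1)
        · subst hr1
          simp [hc]
        · rw [Finsupp.single_apply, if_neg (fun h => hr1 h.symm), mul_zero, sub_zero]
          have hr2 : r = ((1 - r.2 : ℤ), r.2) := Prod.ext (by omega) rfl
          rw [hr2]
          apply gvanish r.2
          intro h1
          apply hr1
          rw [hr2, h1]
          norm_num
      · rw [hgr' ((0 : ℤ), 1) r (by push_cast; push_cast at hd; omega)]
        rw [Finsupp.single_apply, if_neg, mul_zero, sub_zero]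
        intro h
        apply hd
        rw [← h]
        norm_num
    have := sub_eq_zero.mp hdiff
    exact this
  -- Step 7 : final correction and induction
  set E'' := E' + c • d₀ + c • (LieDerivation.ad F B (L ((0 : ℤ), 0))) with hE''def
  have hE''p : ∀ p : ℤ × ℕ, E'' (L p) = E' (L p) - (c * p.2) • L p := by
    intro p
    have hlie : ⁅L ((0 : ℤ), 0), L p⁆ = ((-p.1 - p.2 : ℤ) : F) • L p := by
      have := hL 0 p.1 0 p.2
      rw [show ((0 + p.1 : ℤ), (0 + p.2 : ℕ)) = p from Prod.ext (by ring) (by simp)] at this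
      rw [show ((p.1, p.2) : ℤ × ℕ) = p from rfl] at this
      rw [this]
      congr 1
      push_cast
      ring
    have : E'' (L p) = E' (L p) + c • (d₀ (L p)) + c • ⁅L ((0 : ℤ), 0), L p⁆ := by
      rw [hE''def]
      simp only [LieDerivation.add_apply, LieDerivation.smul_apply]
      congr 1
      simp
    rw [this, hlie, show d₀ (L p) = ((p.1 : ℤ) : F) • L p from by
      have := hd₀ p.1 p.2
      rw [show ((p.1, p.2) : ℤ × ℕ) = p from rfl] at this
      rw [this]
      try norm_num]
    rw [smul_smul, smul_smul]
    push_cast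
    module
  have hE''00 : E'' (L ((0 : ℤ), 0)) = 0 := by
    rw [hE''p, hE'h]
    try simp
  have hE''10 : E'' (L ((1 : ℤ), 0)) = 0 := by
    rw [hE''p, hE'10]
    try simp
  have hE''01 : E'' (L ((0 : ℤ), 1)) = 0 := by
    rw [hE''p, hE'01]
    norm_num
  have hgr'' : ∀ p r : ℤ × ℕ, (r.1 + r.2 : ℤ) ≠ (p.1 + p.2 : ℤ) →
      L.repr (E'' (L p)) r = 0 := by
    intro p r h
    rw [hE''p]
    simp only [map_sub, map_smul, Finsupp.sub_apply, Finsupp.smul_apply, Module.Basis.repr_self,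
      smul_eq_mul]
    rw [hgr' p r h, Finsupp.single_apply, if_neg, mul_zero, sub_zero]
    intro he
    apply h
    rw [he]
  have hall : ∀ (j : ℕ) (β : ℤ), E'' (L (β, j)) = 0 := by
    intro j
    induction j with
    | zero => exact rowzero L hL E'' hE''00 hE''10 hgr''
    | succ j ih =>
      have hdd : ∀ (β : ℤ) (r : ℤ × ℕ),
          ((1 - j - 2 * β : ℤ) : F) * L.repr (E'' (L (β, j + 1))) r = 0 := by
        intro β r
        have h := leib L hL E'' ((0 : ℤ), 1) (β, j) r
        rw [hE''01, ih β] at h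
        simp only [zero_lie, map_zero, Finsupp.coe_zero, Pi.zero_apply, sub_zero, mul_zero] at h
        rw [show (((0 : ℤ) + β, 1 + j) : ℤ × ℕ) = ((β : ℤ), j + 1) from
          Prod.ext (by ring) (by omega)] at h
        rw [show (KK ((0 : ℤ), 1) (β, j) : ℤ) = 1 - j - 2 * β by simp [KK]; ring] at h
        exact h
      have hnon : ∀ β : ℤ, 2 * β ≠ 1 - j → E'' (L (β, j + 1)) = 0 := by
        intro β hne
        apply reprzero L
        intro r
        have h := hdd β r
        have hcz : ((1 - j - 2 * β : ℤ) : F) ≠ 0 := by rw [Int.cast_ne_zero]; omega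
        exact (mul_eq_zero.mp h).resolve_left hcz
      intro β
      by_cases hexc : 2 * β = 1 - j
      · apply hzero L _ (β, j + 1) (fun r hr => hgr'' _ r (by push_cast; push_cast at hr; omega))
        intro k
        have hs := hstar L hL E'' hE''10 (β - 1) (j + 1) k
        rw [show ((β : ℤ) - 1 + 1) = β by ring] at hs
        have hprev : E'' (L (β - 1, j + 1)) = 0 := hnon (β - 1) (by omega)
        rw [hprev] at hs
        simp only [map_zero, Finsupp.coe_zero, Pi.zero_apply, mul_zero] at hs
        have hcz : ((1 - (β - 1) : ℤ) : F) ≠ 0 := by rw [Int.cast_ne_zero]; omega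
        have hres := (mul_eq_zero.mp hs).resolve_left hcz
        exact hres
      · exact hnon β hexc
  -- Conclusion
  have hE''zero : ∀ x : B, E'' x = 0 := by
    have hlin : (E'' : B →ₗ[F] B) = 0 := by
      apply L.ext
      intro p
      exact hall p.2 p.1
    intro x
    exact LinearMap.congr_fun hlin x
  refine ⟨-c, u₁ + u₂ - c • L ((0 : ℤ), 0), ?_⟩
  have key : ∀ x : B, D x = (-c) • d₀ x + ⁅u₁ + u₂ - c • L ((0 : ℤ), 0), x⁆ := by
    intro x
    have h0 := hE''zero x
    have e2 : E'' x = E' x + c • d₀ x + c • ⁅L ((0 : ℤ), 0), x⁆ := by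
      rw [hE''def]
      simp only [LieDerivation.add_apply, LieDerivation.smul_apply]
      congr 1
      simp
    rw [e2, hE' x, hE x] at h0
    have expand : ⁅u₁ + u₂ - c • L ((0 : ℤ), 0), x⁆
        = ⁅u₁, x⁆ + ⁅u₂, x⁆ - c • ⁅L ((0 : ℤ), 0), x⁆ := by
      rw [sub_lie, add_lie, smul_lie]
    apply eq_of_sub_eq_zero
    have hrearr : D x - ((-c) • d₀ x + (⁅u₁, x⁆ + ⁅u₂, x⁆ - c • ⁅L ((0 : ℤ), 0), x⁆))
        = D x - ⁅u₁, x⁆ - ⁅u₂, x⁆ + c • d₀ x + c • ⁅L ((0 : ℤ), 0), x⁆ := by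
      rw [neg_smul]
      abel
    rw [expand, hrearr, h0]
  ext x
  rw [key x]
  simp only [LieDerivation.add_apply, LieDerivation.smul_apply]
  congr 1
  simp

end Block

/-- Theorem 2.1, cohomology part. The quotient of the space of derivations
of the Block type Lie algebra `B` by the subspace of inner derivations (the range of the
adjoint action `u ↦ ad u`) is one-dimensional, spanned by the class of the derivation `d₀`
determined by `d₀ (L (β,j)) = β • L (β,j)`.  In other words `dim H¹(B; B) = 1`. -/
theorem first_cohomology_one_dimensional
    {F : Type*} [Field F] [IsAlgClosed F] [CharZero F]
    {B : Type*} [LieRing B] [LieAlgebra F B]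
    (L : Module.Basis (ℤ × ℕ) F B)
    (hL : ∀ (α β : ℤ) (i j : ℕ),
      ⁅L (α, i), L (β, j)⁆ =
        (((α - 1) * (j + 1) - (β - 1) * (i + 1) : ℤ) : F) • L (α + β, i + j))
    (d₀ : LieDerivation F B B)
    (hd₀ : ∀ (β : ℤ) (j : ℕ), d₀ (L (β, j)) = (β : F) • L (β, j)) :
    Module.rank F
        (LieDerivation F B B ⧸ LinearMap.range (LieDerivation.ad F B).toLinearMap) = 1 ∧
      Submodule.span F
        {(LinearMap.range (LieDerivation.ad F B).toLinearMap).mkQ d₀} = ⊤ := by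
  set R := LinearMap.range (LieDerivation.ad F B).toLinearMap with hR
  set v := R.mkQ d₀ with hv
  have hclass := classification L hL d₀ hd₀
  have hnin := d0_not_inner L hL d₀ hd₀
  have hv0 : v ≠ 0 := by
    intro h
    rw [hv, Submodule.mkQ_apply] at h
    have hmem : d₀ ∈ R := (Submodule.Quotient.mk_eq_zero R).mp h
    rw [hR] at hmem
    obtain ⟨u, hu⟩ := hmem
    exact hnin u (by simpa using hu)
  have hspan : ∀ w : LieDerivation F B B ⧸ R, ∃ a : F, a • v = w := by
    intro w
    obtain ⟨Dq, rfl⟩ := Submodule.mkQ_surjective R w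
    obtain ⟨a, u, hDu⟩ := hclass Dq
    refine ⟨a, ?_⟩
    have hz : R.mkQ (LieDerivation.ad F B u) = 0 :=
      (Submodule.Quotient.mk_eq_zero R).mpr ⟨u, rfl⟩
    rw [hv, ← map_smul, hDu, map_add, hz, add_zero, map_smul]
  refine ⟨rank_eq_one v hv0 hspan, ?_⟩
  rw [eq_top_iff]
  intro w _
  obtain ⟨a, ha⟩ := hspan w
  rw [← ha]
  exact Submodule.smul_mem _ a (Submodule.mem_span_singleton_self v)
end

section
/- (Lemma 2.2) Let d be a derivation of B of degree 0 (i.e., d(B_β) ⊆ B_β for all β ∈ ℤ) which preserves the filtration, i.e., d(B^{[j]}) ⊆ B^{[j]} for every j ∈ ℕ. Then d = ad_u + λ·d₀ for some u ∈ B and λ ∈ F. -/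
/-- The graded component `B_β = span {L (β, k) : k ∈ ℕ}` of the Block type Lie algebra. -/
def gradedComponent {F B : Type*} [Field F] [AddCommGroup B] [Module F B]
    (L : Module.Basis (ℤ × ℕ) F B) (β : ℤ) : Submodule F B :=
  Submodule.span F (Set.range fun k : ℕ => L (β, k))

/-- The filtration component `B^{[j]} = span {L (β, k) : β ∈ ℤ, k ∈ ℕ, k ≤ j}` of the Block
type Lie algebra. -/
def filtrationComponent {F B : Type*} [Field F] [AddCommGroup B] [Module F B]
    (L : Module.Basis (ℤ × ℕ) F B) (m : ℤ) : Submodule F B :=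
  Submodule.span F {x | ∃ (β : ℤ) (k : ℕ), (k : ℤ) ≤ m ∧ x = L (β, k)}

section Aux

variable {F : Type*} [Field F] {B : Type*} [LieRing B] [LieAlgebra F B]

lemma repr_bracket_right (L : Module.Basis (ℤ × ℕ) F B)
    (hL : ∀ (α β : ℤ) (i j : ℕ),
      ⁅L (α, i), L (β, j)⁆ =
        (((α - 1) * (j + 1) - (β - 1) * (i + 1) : ℤ) : F) • L (α + β, i + j))
    (x : B) (β : ℤ) (j : ℕ) (γ : ℤ) (m : ℕ) :
    L.repr ⁅x, L (β, j)⁆ (γ, m) =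
      (if j ≤ m then (((γ - β - 1) * (j + 1) - (β - 1) * ((m - j : ℕ) + 1) : ℤ) : F) else 0)
        * L.repr x (γ - β, m - j) := by
  have hx : x ∈ Submodule.span F (Set.range L) := by rw [Module.Basis.span_eq]; trivial
  induction hx using Submodule.span_induction with
  | mem y hy =>
    obtain ⟨⟨α, i⟩, rfl⟩ := hy
    rw [hL]
    simp only [map_smul, Module.Basis.repr_self, Finsupp.smul_single, smul_eq_mul, mul_one,
      Finsupp.single_apply]
    by_cases h2 : α + β = γ
    · by_cases h3 : i + j = m
      · subst h2; subst h3
        have e1 : α + β - β = α := by ring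
        have e2 : i + j - j = i := by omega
        simp [e1, e2, Prod.ext_iff]
      · rw [if_neg (by simp [Prod.ext_iff]; intro _; omega)]
        rcases le_or_gt j m with hj | hj
        · rw [if_pos hj, if_neg (by simp [Prod.ext_iff]; intro h4 h5; omega), mul_zero]
        · rw [if_neg (by omega), zero_mul]
    · rw [if_neg (by simp [Prod.ext_iff]; intro h; exact absurd h h2)]
      rcases le_or_gt j m with hj | hj
      · rw [if_pos hj, if_neg (by simp [Prod.ext_iff]; intro h4 h5; omega), mul_zero]
      · rw [if_neg (by omega), zero_mul]
  | zero => simp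
  | add y z _ _ hy hz => rw [add_lie, map_add, Finsupp.add_apply, hy, hz, map_add,
      Finsupp.add_apply]; ring
  | smul a y _ hy => rw [smul_lie, map_smul, Finsupp.smul_apply, hy, map_smul,
      Finsupp.smul_apply, smul_eq_mul, smul_eq_mul]; ring

lemma repr_bracket_left (L : Module.Basis (ℤ × ℕ) F B)
    (hL : ∀ (α β : ℤ) (i j : ℕ),
      ⁅L (α, i), L (β, j)⁆ =
        (((α - 1) * (j + 1) - (β - 1) * (i + 1) : ℤ) : F) • L (α + β, i + j))
    (x : B) (α : ℤ) (i : ℕ) (γ : ℤ) (m : ℕ) :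
    L.repr ⁅L (α, i), x⁆ (γ, m) =
      (if i ≤ m then (((α - 1) * ((m - i : ℕ) + 1) - (γ - α - 1) * (i + 1) : ℤ) : F) else 0)
        * L.repr x (γ - α, m - i) := by
  rw [← lie_skew, map_neg, Finsupp.neg_apply, repr_bracket_right L hL x α i γ m]
  have : ((γ - α - 1) * (↑i + 1) - (α - 1) * (↑(m - i) + 1) : ℤ)
      = -((α - 1) * (↑(m - i) + 1) - (γ - α - 1) * (↑i + 1)) := by ring
  rw [this]
  split <;> push_cast <;> ring

end Aux

/-- Lemma 2.2. Let `d` be a derivation of the Block type Lie algebra `B`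
of degree `0` (i.e. `d(B_β) ⊆ B_β` for all `β`) which preserves the filtration
(`d(B^{[j]}) ⊆ B^{[j]}` for all `j ∈ ℕ`).  Then `d = ad u + λ • d₀` for some `u ∈ B` and
`λ ∈ F`, where `d₀` is the derivation determined by `d₀ (L (β,j)) = β • L (β,j)`. -/
theorem derivation_degree_zero_eq_inner_add_smul_d0
    {F : Type*} [Field F] [IsAlgClosed F] [CharZero F]
    {B : Type*} [LieRing B] [LieAlgebra F B]
    (L : Module.Basis (ℤ × ℕ) F B)
    (hL : ∀ (α β : ℤ) (i j : ℕ),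
      ⁅L (α, i), L (β, j)⁆ =
        (((α - 1) * (j + 1) - (β - 1) * (i + 1) : ℤ) : F) • L (α + β, i + j))
    (d₀ : LieDerivation F B B)
    (hd₀ : ∀ (β : ℤ) (j : ℕ), d₀ (L (β, j)) = (β : F) • L (β, j))
    (d : LieDerivation F B B)
    (hdeg : ∀ β : ℤ, (gradedComponent L β).map d.toLinearMap ≤ gradedComponent L β)
    (hfil : ∀ j : ℕ,
      (filtrationComponent L (j : ℤ)).map d.toLinearMap ≤ filtrationComponent L (j : ℤ)) :
    ∃ (u : B) (lam : F), ∀ x : B, d x = ⁅u, x⁆ + lam • d₀ x := by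
  classical
  set c : ℤ → ℕ → ℕ → F := fun β j k => L.repr (d (L (β, j))) (β, k) with hc
  -- support lemma
  have hsupp0 : ∀ (β : ℤ) (j : ℕ) (γ : ℤ) (k : ℕ), (γ ≠ β ∨ j < k) →
      L.repr (d (L (β, j))) (γ, k) = 0 := by
    intro β j γ k hk
    rcases hk with hk | hk
    · have h1 : d (L (β, j)) ∈ gradedComponent L β :=
        hdeg β (Submodule.mem_map_of_mem (Submodule.subset_span ⟨j, rfl⟩))
      have h2 : (Set.range fun k : ℕ => L (β, k)) = L '' {p : ℤ × ℕ | p.1 = β} := by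
        ext x
        constructor
        · rintro ⟨k, rfl⟩; exact ⟨(β, k), rfl, rfl⟩
        · rintro ⟨⟨β', k'⟩, hp, rfl⟩
          obtain rfl : β' = β := hp
          exact ⟨k', rfl⟩
      rw [gradedComponent, h2, Module.Basis.mem_span_image] at h1
      by_contra hne
      exact hk (h1 (Finsupp.mem_support_iff.mpr hne))
    · have h1 : d (L (β, j)) ∈ filtrationComponent L (j : ℤ) :=
        hfil j (Submodule.mem_map_of_mem (Submodule.subset_span ⟨β, j, le_refl _, rfl⟩))
      have h2 : {x | ∃ (β' : ℤ) (k' : ℕ), (k' : ℤ) ≤ (j : ℤ) ∧ x = L (β', k')}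
          = L '' {p : ℤ × ℕ | (p.2 : ℤ) ≤ (j : ℤ)} := by
        ext x
        constructor
        · rintro ⟨β', k', hk', rfl⟩; exact ⟨(β', k'), hk', rfl⟩
        · rintro ⟨⟨β', k'⟩, hp, rfl⟩; exact ⟨β', k', hp, rfl⟩
      rw [filtrationComponent, h2, Module.Basis.mem_span_image] at h1
      by_contra hne
      have := h1 (Finsupp.mem_support_iff.mpr hne)
      simp only [Set.mem_setOf_eq] at this
      omega
  -- key equation
  have hkey : ∀ (α : ℤ) (i : ℕ) (β : ℤ) (j : ℕ) (m : ℕ),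
      (((α - 1) * (j + 1) - (β - 1) * (i + 1) : ℤ) : F) * c (α + β) (i + j) m =
        (if i ≤ m then (((α - 1) * ((m - i : ℕ) + 1) - (β - 1) * (i + 1) : ℤ) : F) else 0)
          * c β j (m - i)
        + (if j ≤ m then (((α - 1) * (j + 1) - (β - 1) * ((m - j : ℕ) + 1) : ℤ) : F) else 0)
          * c α i (m - j) := by
    intro α i β j m
    have hd := d.apply_lie_eq_add (L (α, i)) (L (β, j))
    rw [hL, map_smul] at hd
    have h := congrArg (fun y => L.repr y (α + β, m)) hd
    simp only [map_smul, Finsupp.smul_apply, smul_eq_mul, map_add, Finsupp.add_apply] at h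
    rw [repr_bracket_left L hL (d (L (β, j))) α i (α + β) m,
      repr_bracket_right L hL (d (L (α, i))) β j (α + β) m] at h
    have e1 : α + β - α = β := by ring
    have e2 : α + β - β = α := by ring
    rw [e1, e2] at h
    exact h
  -- top coefficient additivity
  have htop : ∀ (α : ℤ) (i : ℕ) (β : ℤ) (j : ℕ),
      ((α - 1) * ((j : ℤ) + 1) : ℤ) ≠ (β - 1) * ((i : ℤ) + 1) →
      c (α + β) (i + j) (i + j) = c α i i + c β j j := by
    intro α i β j hne
    have h := hkey α i β j (i + j)
    rw [if_pos (Nat.le_add_right i j), if_pos (Nat.le_add_left j i),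
      Nat.add_sub_cancel_left, Nat.add_sub_cancel] at h
    have hP : (((α - 1) * (j + 1) - (β - 1) * (i + 1) : ℤ) : F) ≠ 0 :=
      Int.cast_ne_zero.mpr (sub_ne_zero.mpr hne)
    apply mul_left_cancel₀ hP
    linear_combination h
  -- vanishing of lower coefficients
  have hlow : ∀ (j k : ℕ), k < j → ∀ (β : ℤ), c β j k = 0 := by
    intro j k hkj
    have hstar : ∀ (α β : ℤ),
        (((α : F) - 1) * ((j : F) + 1) - ((β : F) - 1)) * c (α + β) j k
          = (((α : F) - 1) * ((k : F) + 1) - ((β : F) - 1)) * c β j k := by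
      intro α β
      have h := hkey α 0 β j k
      rw [if_pos (Nat.zero_le k), if_neg (by omega)] at h
      simp only [Nat.sub_zero, Nat.zero_add] at h
      push_cast at h ⊢
      linear_combination h
    have hstep : ∀ β : ℤ, β ≠ 1 → c (β + 1) j k = c β j k := by
      intro β hβ
      have h := hstar 1 β
      push_cast at h
      have hne : ((1 : F) - (β : F)) ≠ 0 := by
        have h0 : ((1 - β : ℤ) : F) ≠ 0 := Int.cast_ne_zero.mpr (by omega)
        push_cast at h0
        exact h0
      have h2 : ((1 : F) - (β : F)) * c (1 + β) j k = ((1 : F) - (β : F)) * c β j k := by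
        linear_combination h
      rw [add_comm 1 β] at h2
      exact mul_left_cancel₀ hne h2
    have hjk : ((j : F) - (k : F)) ≠ 0 := by
      have : ((j : F)) ≠ (k : F) := by exact_mod_cast hkj.ne'
      exact sub_ne_zero.mpr this
    have he2 : c 2 j k = 0 := by
      have h := hstar 0 2
      norm_num at h
      rcases h with h | h
      · omega
      · exact h
    have he0 : c 0 j k = 0 := by
      have h := hstar 2 0
      norm_num at h
      have hne : ((k : F) + 2) ≠ 0 := by
        have h0 : (((k + 2 : ℕ)) : F) ≠ 0 := Nat.cast_ne_zero.mpr (by omega)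
        push_cast at h0
        exact h0
      have h2 : ((k : F) + 2) * c 0 j k = 0 := by
        rw [he2] at h
        linear_combination -h
      rcases mul_eq_zero.mp h2 with h3 | h3
      · exact absurd h3 hne
      · exact h3
    have heneg : ∀ n : ℕ, c (1 - (n : ℤ)) j k = 0 := by
      intro n
      induction n with
      | zero =>
        have h := hstep 0 (by norm_num)
        norm_num at h ⊢
        rw [h]
        exact he0
      | succ n ih =>
        have h := hstep (1 - ((n : ℤ) + 1)) (by omega)
        have e : (1 - ((n : ℤ) + 1)) + 1 = 1 - (n : ℤ) := by ring
        rw [e] at h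
        rw [show (1 - (((n : ℕ) + 1 : ℕ) : ℤ)) = (1 - ((n : ℤ) + 1)) by push_cast; ring]
        rw [← h]
        exact ih
    have hepos : ∀ n : ℕ, c (2 + (n : ℤ)) j k = 0 := by
      intro n
      induction n with
      | zero => norm_num; exact he2
      | succ n ih =>
        have h := hstep (2 + (n : ℤ)) (by omega)
        rw [show (2 + (((n : ℕ) + 1 : ℕ) : ℤ)) = (2 + (n : ℤ)) + 1 by push_cast; ring]
        rw [h]
        exact ih
    intro β
    rcases le_or_gt β 1 with hβ | hβ
    · have := heneg (1 - β).toNat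
      rwa [show (1 - ((1 - β).toNat : ℤ)) = β by omega] at this
    · have := hepos (β - 2).toNat
      rwa [show (2 + ((β - 2).toNat : ℤ)) = β by omega] at this
  -- additivity consequences
  have f00 : c 0 0 0 = 0 := by
    have h := htop 1 0 0 0 (by norm_num)
    norm_num at h
    linear_combination h
  have gadd : ∀ α β : ℤ, α ≠ β → c (α + β) 0 0 = c α 0 0 + c β 0 0 := by
    intro α β hne
    have h := htop α 0 β 0 (by simp only [Nat.cast_zero, zero_add, mul_one]; omega)
    simpa using h
  have gneg : ∀ n : ℤ, n ≠ 0 → c (-n) 0 0 = - c n 0 0 := by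
    intro n hn
    have h := gadd n (-n) (by omega)
    rw [show n + -n = 0 by ring, f00] at h
    linear_combination -h
  set A : F := c 1 0 0 with hA
  set Bc : F := c 0 1 1 with hBc
  have g2 : c 2 0 0 = 2 * A := by
    have h1 := gadd (-4) 2 (by norm_num)
    have h2 := gadd (-3) (-1) (by norm_num)
    have h3 := gadd (-2) (-1) (by norm_num)
    have h4 := gneg 1 one_ne_zero
    norm_num at h1 h2 h3
    linear_combination -h1 - h2 - h3 - 2 * h4 - 2 * hA
  have hnat : ∀ m : ℕ, c (m : ℤ) 0 0 = (m : F) * A := by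
    have gnat2 : ∀ n : ℕ, 2 ≤ n → c (n : ℤ) 0 0 = (n : F) * A := by
      intro n hn
      induction n, hn using Nat.le_induction with
      | base => norm_num [g2]
      | succ n hn ih =>
        have h := gadd n 1 (by omega)
        push_cast
        push_cast at ih
        rw [h, ih, ← hA]
        ring
    intro m
    match m with
    | 0 => simp [f00]
    | 1 => norm_num; exact hA.symm
    | (m + 2) => exact gnat2 (m + 2) (by omega)
  have gint : ∀ n : ℤ, c n 0 0 = (n : F) * A := by
    intro n
    rcases le_or_gt 0 n with h | h
    · have h2 := hnat n.toNat
      have e : ((n.toNat : ℤ)) = n := by omega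
      rw [e] at h2
      have e2 := congrArg (fun t : ℤ => (t : F)) e
      push_cast at e2
      rw [h2, e2]
    · have h1 := gneg (-n) (by omega)
      rw [neg_neg] at h1
      have h2 := hnat (-n).toNat
      have e : (((-n).toNat : ℤ)) = -n := by omega
      rw [e] at h2
      have e2 := congrArg (fun t : ℤ => (t : F)) e
      push_cast at e2
      rw [h1, h2, e2]
      push_cast
      ring
  have h1f : ∀ γ : ℤ, c γ 1 1 = c γ 0 0 + Bc := by
    intro γ
    have h := htop γ 0 0 1 (by push_cast; omega)
    rw [hBc]
    simpa using h
  have fmain : ∀ (j : ℕ) (γ : ℤ), c γ j j = (γ : F) * A + (j : F) * Bc := by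
    intro j
    induction j with
    | zero => intro γ; simpa using gint γ
    | succ j ih =>
      intro γ
      by_cases hγ : γ = 2
      · subst hγ
        have h := htop 3 j (-1) 1 (by push_cast; omega)
        norm_num at h
        rw [h, ih 3, h1f (-1), gint (-1)]
        push_cast
        ring
      · have h := htop (γ - 1) j 1 1 (by push_cast; omega)
        rw [show γ - 1 + 1 = γ by ring] at h
        rw [h, ih (γ - 1), h1f 1, gint 1]
        push_cast
        ring
  -- d acts diagonally
  have hdL : ∀ (β : ℤ) (j : ℕ), d (L (β, j)) = ((β : F) * A + (j : F) * Bc) • L (β, j) := by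
    intro β j
    apply L.repr.injective
    ext ⟨γ, m⟩
    rw [map_smul, Module.Basis.repr_self, Finsupp.smul_single, smul_eq_mul, mul_one,
      Finsupp.single_apply]
    by_cases h : ((β, j) : ℤ × ℕ) = (γ, m)
    · rw [if_pos h]
      injection h with h1 h2
      subst h1
      subst h2
      exact fmain j β
    · rw [if_neg h]
      by_cases hγ : γ = β
      · rw [hγ]
        have hm : j ≠ m := by
          intro hm
          exact h (by rw [hγ, hm])
        rcases lt_or_gt_of_ne hm with hlt | hgt
        · exact hsupp0 β j β m (Or.inr hlt)
        · exact hlow j m hgt β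
      · exact hsupp0 β j γ m (Or.inl hγ)
  -- conclusion
  refine ⟨(-Bc) • L (0, 0), A - Bc, ?_⟩
  have hmaps : (d.toLinearMap : B →ₗ[F] B)
      = (LieAlgebra.ad F B ((-Bc) • L (0, 0))) + (A - Bc) • d₀.toLinearMap := by
    apply L.ext
    rintro ⟨β, j⟩
    simp only [LinearMap.add_apply, LieAlgebra.ad_apply, LinearMap.smul_apply,
      LieDerivation.coeFn_coe]
    rw [hdL β j, hd₀ β j, smul_lie, hL 0 β 0 j]
    simp only [zero_add, Nat.cast_zero]
    match_scalars
    push_cast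
    ring
  intro x
  have hx := LinearMap.congr_fun hmaps x
  simpa only [LinearMap.add_apply, LieAlgebra.ad_apply, LinearMap.smul_apply,
    LieDerivation.coeFn_coe] using hx
end

section
/- (Lemma 3.1, first part) An element S ∈ B is ad-locally finite if and only if S is a scalar multiple of L_{0,0}; that is, up to scalars, L_{0,0} is the unique ad-locally finite element of B. -/
namespace Stmt6Aux

/-- The structure constant of the Block type Lie algebra. -/
def C (t e : ℤ × ℕ) : ℤ := (t.1 - 1) * (e.2 + 1) - (e.1 - 1) * (t.2 + 1)

variable {F : Type*} [Field F] {B : Type*} [LieRing B] [LieAlgebra F B]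

lemma lie_sum_left {ι : Type*} (s : Finset ι) (f : ι → B) (y : B) :
    ⁅(∑ i ∈ s, f i), y⁆ = ∑ i ∈ s, ⁅f i, y⁆ := by
  induction s using Finset.cons_induction with
  | empty => simp
  | cons a s ha ih => simp [Finset.sum_cons, add_lie, ih]

lemma lie_sum_right {ι : Type*} (x : B) (s : Finset ι) (f : ι → B) :
    ⁅x, (∑ i ∈ s, f i)⁆ = ∑ i ∈ s, ⁅x, f i⁆ := by
  induction s using Finset.cons_induction with
  | empty => simp
  | cons a s ha ih => simp [Finset.sum_cons, lie_add, ih]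

variable (L : Module.Basis (ℤ × ℕ) F B)

lemma expand
    (hL : ∀ t e : ℤ × ℕ, ⁅L t, L e⁆ = ((C t e : ℤ) : F) • L (t.1 + e.1, t.2 + e.2))
    (S u : B) (d : ℤ × ℕ) :
    L.repr ⁅S, u⁆ d =
      ∑ t ∈ (L.repr S).support, ∑ e ∈ (L.repr u).support,
        if (t.1 + e.1, t.2 + e.2) = d then L.repr S t * L.repr u e * (C t e : F) else 0 := by
  conv_lhs =>
    rw [← L.linearCombination_repr S, ← L.linearCombination_repr u,
      Finsupp.linearCombination_apply, Finsupp.linearCombination_apply,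
      Finsupp.sum, Finsupp.sum, lie_sum_left]
  simp only [lie_sum_right, smul_lie, lie_smul, hL, smul_smul, map_sum, map_smul,
    Module.Basis.repr_self, Finsupp.finset_sum_apply, Finsupp.smul_apply, Finsupp.single_apply,
    smul_eq_mul, mul_ite, mul_one, mul_zero]
  refine Finset.sum_congr rfl fun t ht => Finset.sum_congr rfl fun e he => ?_
  split <;> ring

lemma support_subset
    (hL : ∀ t e : ℤ × ℕ, ⁅L t, L e⁆ = ((C t e : ℤ) : F) • L (t.1 + e.1, t.2 + e.2))
    (S u : B) (d : ℤ × ℕ) (hd : L.repr ⁅S, u⁆ d ≠ 0) :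
    ∃ t ∈ (L.repr S).support, ∃ e ∈ (L.repr u).support, d = (t.1 + e.1, t.2 + e.2) := by
  rw [expand L hL] at hd
  obtain ⟨t, ht, h⟩ := Finset.exists_ne_zero_of_sum_ne_zero hd
  obtain ⟨e, he, h⟩ := Finset.exists_ne_zero_of_sum_ne_zero h
  refine ⟨t, ht, e, he, ?_⟩
  by_contra hc
  rw [if_neg (fun hh => hc hh.symm)] at h
  exact h rfl

lemma leading
    (hL : ∀ t e : ℤ × ℕ, ⁅L t, L e⁆ = ((C t e : ℤ) : F) • L (t.1 + e.1, t.2 + e.2))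
    (ψ : ℤ × ℕ → ℝ) (hinj : Function.Injective ψ)
    (hadd : ∀ a b : ℤ × ℕ, ψ (a.1 + b.1, a.2 + b.2) = ψ a + ψ b)
    (S u : B) (t₀ e₀ : ℤ × ℕ)
    (hmax : ∀ t ∈ (L.repr S).support, ψ t ≤ ψ t₀)
    (hmax' : ∀ e ∈ (L.repr u).support, ψ e ≤ ψ e₀) :
    L.repr ⁅S, u⁆ (t₀.1 + e₀.1, t₀.2 + e₀.2)
      = L.repr S t₀ * L.repr u e₀ * (C t₀ e₀ : F) := by
  rw [expand L hL]
  rw [Finset.sum_eq_single t₀]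
  · rw [Finset.sum_eq_single e₀]
    · rw [if_pos rfl]
    · intro e he hne
      rw [if_neg]
      intro hc
      have hψ := congrArg ψ hc
      rw [hadd t₀ e, hadd t₀ e₀] at hψ
      exact hne (hinj (by linarith))
    · intro h
      rw [if_pos rfl, Finsupp.notMem_support_iff.mp h]
      ring
  · intro t ht hne
    refine Finset.sum_eq_zero fun e he => ?_
    rw [if_neg]
    intro hc
    have hψ := congrArg ψ hc
    rw [hadd t e, hadd t₀ e₀] at hψ
    have h1 := hmax t ht
    have h2 := hmax' e he
    exact hne (hinj (by linarith))
  · intro h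
    refine Finset.sum_eq_zero fun e he => ?_
    rw [Finsupp.notMem_support_iff.mp h]
    split <;> ring

lemma phi_inj : Function.Injective (fun a : ℤ × ℕ => (a.1 : ℝ) + Real.sqrt 2 * a.2) := by
  intro a b h
  simp only at h
  by_cases h2 : a.2 = b.2
  · have h1 : (a.1 : ℝ) = b.1 := by
      rw [h2] at h; linarith
    exact Prod.ext (by exact_mod_cast h1) h2
  · exfalso
    have hne : ((a.2 : ℝ)) - b.2 ≠ 0 := by
      intro hh
      exact h2 (by exact_mod_cast sub_eq_zero.mp hh)
    refine irrational_sqrt_two ⟨((b.1 : ℚ) - a.1) / ((a.2 : ℚ) - b.2), ?_⟩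
    push_cast
    field_simp
    linarith

end Stmt6Aux

open Stmt6Aux in
/-- Lemma 3.1, first part. An element `S` of the Block type Lie algebra `B`
is ad-locally finite (for every `v ∈ B` the span of `{(ad S)^m v : m ∈ ℕ}` is finite
dimensional) if and only if `S` is a scalar multiple of `L (0,0)`. -/
theorem adLocallyFinite_iff_smul_L00
    {F : Type*} [Field F] [IsAlgClosed F] [CharZero F]
    {B : Type*} [LieRing B] [LieAlgebra F B]
    (L : Module.Basis (ℤ × ℕ) F B)
    (hL : ∀ (α β : ℤ) (i j : ℕ),
      ⁅L (α, i), L (β, j)⁆ =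
        (((α - 1) * (j + 1) - (β - 1) * (i + 1) : ℤ) : F) • L (α + β, i + j))
    (S : B) :
    (∀ v : B, FiniteDimensional F
        (Submodule.span F (Set.range fun m : ℕ => ((LieAlgebra.ad F B S) ^ m) v))) ↔
      ∃ c : F, S = c • L (0, 0) := by
  have hL' : ∀ t e : ℤ × ℕ, ⁅L t, L e⁆ = ((C t e : ℤ) : F) • L (t.1 + e.1, t.2 + e.2) := by
    intro t e
    simpa [C] using hL t.1 e.1 t.2 e.2
  constructor
  · -- hard direction
    intro h
    have hsupp : ∀ t ∈ (L.repr S).support, t = ((0 : ℤ), (0 : ℕ)) := by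
      by_contra hc
      push_neg at hc
      obtain ⟨t₁, ht₁, ht₁ne⟩ := hc
      -- the linear functional φ
      set φ : ℤ × ℕ → ℝ := fun a => (a.1 : ℝ) + Real.sqrt 2 * a.2 with hφ
      have hφinj : Function.Injective φ := phi_inj
      have hφ0 : φ ((0 : ℤ), (0 : ℕ)) = 0 := by simp [hφ]
      have hφt₁ : φ t₁ ≠ 0 := fun hh => ht₁ne (hφinj (hh.trans hφ0.symm))
      obtain ⟨ε, hε1, hε2⟩ : ∃ ε : ℝ, ε ≠ 0 ∧ 0 < ε * φ t₁ := by
        rcases hφt₁.lt_or_gt with hlt | hlt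
        · exact ⟨-1, by norm_num, by nlinarith⟩
        · exact ⟨1, by norm_num, by nlinarith⟩
      set ψ : ℤ × ℕ → ℝ := fun a => ε * φ a with hψdef
      have hinj : Function.Injective ψ := fun a b hab =>
        hφinj (mul_left_cancel₀ hε1 hab)
      have hadd : ∀ a b : ℤ × ℕ, ψ (a.1 + b.1, a.2 + b.2) = ψ a + ψ b := by
        intro a b
        simp only [hψdef, hφ]
        push_cast
        ring
      have hψ0 : ψ ((0 : ℤ), (0 : ℕ)) = 0 := by
        show ε * φ ((0 : ℤ), (0 : ℕ)) = 0
        rw [hφ0, mul_zero]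
      -- the maximizer t₀
      obtain ⟨t₀, ht₀T, ht₀max⟩ :=
        (L.repr S).support.exists_max_image ψ ⟨t₁, ht₁⟩
      have hψt₀pos : 0 < ψ t₀ := lt_of_lt_of_le hε2 (ht₀max t₁ ht₁)
      -- choose β
      obtain ⟨β, hβ⟩ : ∃ β : ℤ, ∀ k : ℕ,
          ((t₀.1 - 1) * (k * t₀.2 + 1) - (β + k * t₀.1 - 1) * ((t₀.2 : ℤ) + 1) : ℤ) ≠ 0 := by
        have hn : (0 : ℤ) ≤ (t₀.2 : ℤ) := Int.ofNat_nonneg _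
        rcases lt_trichotomy (t₀.1 + (t₀.2 : ℤ)) 0 with hcs | hcs | hcs
        · refine ⟨t₀.1 - 1, fun k => ?_⟩
          have hk : (0 : ℤ) ≤ (k : ℤ) := Int.ofNat_nonneg _
          have ha : t₀.1 < 0 := by linarith
          nlinarith [mul_nonneg hk (neg_nonneg.mpr hcs.le), mul_nonneg (by linarith : (0:ℤ) ≤ -(t₀.1 - 2)) hn]
        · refine ⟨1, fun k => ?_⟩
          have : ((t₀.1 - 1) * (k * t₀.2 + 1) - (1 + k * t₀.1 - 1) * ((t₀.2 : ℤ) + 1) : ℤ)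
              = t₀.1 - 1 := by linear_combination (-(k : ℤ)) * hcs
          rw [this]
          have ha : t₀.1 ≤ 0 := by linarith
          linarith
        · refine ⟨(t₀.1.natAbs : ℤ) + 2, fun k => ?_⟩
          have hk : (0 : ℤ) ≤ (k : ℤ) := Int.ofNat_nonneg _
          have ha : t₀.1 ≤ (t₀.1.natAbs : ℤ) := Int.le_natAbs
          have hb : (0 : ℤ) ≤ (t₀.1.natAbs : ℤ) := Int.ofNat_nonneg _
          nlinarith [mul_nonneg hk hcs.le, mul_nonneg (by linarith : (0:ℤ) ≤ (t₀.1.natAbs : ℤ) + 1) hn]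
      -- the sequence of degrees and vectors
      set dm : ℕ → ℤ × ℕ := fun m => (β + m * t₀.1, m * t₀.2) with hdm
      set w : ℕ → B := fun m => ((LieAlgebra.ad F B S) ^ m) (L (dm 0)) with hwdef
      have hdm_succ : ∀ m : ℕ, (t₀.1 + (dm m).1, t₀.2 + (dm m).2) = dm (m + 1) := by
        intro m
        refine Prod.ext ?_ ?_
        · show t₀.1 + (β + m * t₀.1) = β + ((m : ℕ) + 1 : ℕ) * t₀.1
          push_cast
          ring
        · show t₀.2 + m * t₀.2 = (m + 1) * t₀.2
          ring
      have hψsucc : ∀ m : ℕ, ψ (dm (m + 1)) = ψ t₀ + ψ (dm m) := by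
        intro m
        rw [← hdm_succ m, hadd]
      have hw_succ : ∀ m : ℕ, w (m + 1) = ⁅S, w m⁆ := by
        intro m
        show ((LieAlgebra.ad F B S) ^ (m + 1)) (L (dm 0)) = _
        rw [pow_succ', Module.End.mul_apply, LieAlgebra.ad_apply]
      -- main induction
      have main : ∀ m : ℕ, L.repr (w m) (dm m) ≠ 0 ∧
          ∀ d ∈ (L.repr (w m)).support, d = dm m ∨ ψ d < ψ (dm m) := by
        intro m
        induction m with
        | zero =>
          constructor
          · show L.repr (((LieAlgebra.ad F B S) ^ 0) (L (dm 0))) (dm 0) ≠ 0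
            rw [pow_zero, Module.End.one_apply, Module.Basis.repr_self, Finsupp.single_eq_same]
            exact one_ne_zero
          · intro d hd
            left
            show d = dm 0
            have : L.repr (w 0) = Finsupp.single (dm 0) 1 := by
              show L.repr (((LieAlgebra.ad F B S) ^ 0) (L (dm 0))) = _
              rw [pow_zero, Module.End.one_apply, Module.Basis.repr_self]
            rw [this] at hd
            simpa using Finsupp.mem_support_iff.mp hd |>.imp_symm (fun _ => by
              exact Finsupp.single_eq_of_ne (by tauto)) |> fun _ => by
                by_contra hne
                exact Finsupp.mem_support_iff.mp hd (Finsupp.single_eq_of_ne hne)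
        | succ m ih =>
          have hmax' : ∀ e ∈ (L.repr (w m)).support, ψ e ≤ ψ (dm m) := by
            intro e he
            rcases ih.2 e he with rfl | hlt
            · exact le_refl _
            · exact hlt.le
          constructor
          · rw [hw_succ m, ← hdm_succ m,
              leading L hL' ψ hinj hadd S (w m) t₀ (dm m) ht₀max hmax']
            refine mul_ne_zero (mul_ne_zero ?_ ih.1) ?_
            · exact Finsupp.mem_support_iff.mp ht₀T
            · rw [Int.cast_ne_zero]
              have := hβ m
              show (C t₀ (dm m) : ℤ) ≠ 0
              have hCeq : (C t₀ (dm m) : ℤ) =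
                  (t₀.1 - 1) * (m * t₀.2 + 1) - (β + m * t₀.1 - 1) * ((t₀.2 : ℤ) + 1) := by
                show (t₀.1 - 1) * (((m * t₀.2 : ℕ) : ℤ) + 1) - ((β + m * t₀.1) - 1) * ((t₀.2 : ℤ) + 1) = _
                push_cast
                ring
              rw [hCeq]
              exact this
          · intro d hd
            have hne := Finsupp.mem_support_iff.mp hd
            rw [hw_succ m] at hne
            obtain ⟨t, ht, e, he, rfl⟩ := support_subset L hL' S (w m) d hne
            by_cases hcase : t = t₀ ∧ e = dm m
            · left
              rw [hcase.1, hcase.2, hdm_succ]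
            · right
              rw [hadd t e, hψsucc m]
              have h1 : ψ t ≤ ψ t₀ := ht₀max t ht
              have h2 : ψ e ≤ ψ (dm m) := hmax' e he
              rcases not_and_or.mp hcase with hne' | hne'
              · have : ψ t < ψ t₀ := lt_of_le_of_ne h1 (fun hh => hne' (hinj hh))
                linarith
              · have : ψ e < ψ (dm m) := by
                  rcases ih.2 e he with rfl | hlt
                  · exact absurd rfl hne'
                  · exact hlt
                linarith
      -- monotonicity of ψ ∘ dm
      have hψdm : ∀ m : ℕ, ψ (dm m) = ψ (dm 0) + m * ψ t₀ := by
        intro m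
        induction m with
        | zero => simp
        | succ m ih =>
          rw [hψsucc m, ih]
          push_cast
          ring
      have hmono : ∀ a b : ℕ, a < b → ψ (dm a) < ψ (dm b) := by
        intro a b hab
        rw [hψdm a, hψdm b]
        have : (a : ℝ) < b := by exact_mod_cast hab
        nlinarith
      -- linear independence of the w m
      classical
      have hli : LinearIndependent F w := by
        rw [linearIndependent_iff']
        intro s g hg i hi
        by_contra hgi
        set s' := s.filter (fun i => g i ≠ 0) with hs'def
        have hs' : s'.Nonempty := ⟨i, Finset.mem_filter.mpr ⟨hi, hgi⟩⟩
        set m := s'.max' hs' with hmdef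
        have hm : m ∈ s' := s'.max'_mem hs'
        have hms : m ∈ s := (Finset.mem_filter.mp hm).1
        have hgm : g m ≠ 0 := (Finset.mem_filter.mp hm).2
        have hz := congrArg (fun x => L.repr x (dm m)) hg
        simp only [map_sum, map_smul, Finsupp.finset_sum_apply, Finsupp.smul_apply,
          smul_eq_mul, map_zero, Finsupp.coe_zero, Pi.zero_apply] at hz
        rw [Finset.sum_eq_single m] at hz
        · exact hgm ((mul_eq_zero.mp hz).resolve_right (main m).1)
        · intro b hb hbm
          by_cases hgb : g b = 0
          · rw [hgb, zero_mul]
          · have hbs' : b ∈ s' := Finset.mem_filter.mpr ⟨hb, hgb⟩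
            have hble : b ≤ m := s'.le_max' b hbs'
            have hblt : b < m := lt_of_le_of_ne hble hbm
            have : L.repr (w b) (dm m) = 0 := by
              by_contra hnz
              have hmem : dm m ∈ (L.repr (w b)).support := Finsupp.mem_support_iff.mpr hnz
              rcases (main b).2 (dm m) hmem with heq | hlt
              · have := hmono b m hblt
                rw [heq] at this
                exact lt_irrefl _ this
              · have := hmono b m hblt
                linarith
            rw [this, mul_zero]
        · intro hms'
          exact absurd hms hms'
      -- contradiction with finite dimensionality
      have hfin := h (L (dm 0))
      have hliN : LinearIndependent F
          (fun m : ℕ => (⟨w m, Submodule.subset_span ⟨m, rfl⟩⟩ :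
            Submodule.span F (Set.range fun m : ℕ => ((LieAlgebra.ad F B S) ^ m) (L (dm 0))))) := by
        apply LinearIndependent.of_comp
          (Submodule.span F (Set.range fun m : ℕ => ((LieAlgebra.ad F B S) ^ m) (L (dm 0)))).subtype
        exact hli
      exact Module.Finite.not_linearIndependent_of_infinite _ hliN
    -- conclude S = c • L (0,0)
    refine ⟨L.repr S ((0 : ℤ), (0 : ℕ)), L.repr.injective ?_⟩
    rw [map_smul, Module.Basis.repr_self]
    ext d
    rcases eq_or_ne d ((0 : ℤ), (0 : ℕ)) with rfl | hd
    · simp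
    · have hd' : d ∉ (L.repr S).support := fun hmem => hd (hsupp d hmem)
      rw [Finsupp.notMem_support_iff.mp hd']
      rw [Finsupp.smul_apply, Finsupp.single_eq_of_ne hd, smul_zero]
  · -- easy direction
    rintro ⟨c, rfl⟩ v
    set W := Submodule.span F (L '' ((L.repr v).support : Set (ℤ × ℕ))) with hWdef
    have hWfin : FiniteDimensional F W :=
      FiniteDimensional.span_of_finite F (((L.repr v).support.finite_toSet).image L)
    have hWv : v ∈ W := by
      have hv := L.linearCombination_repr v
      rw [Finsupp.linearCombination_apply, Finsupp.sum] at hv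
      rw [← hv]
      exact Submodule.sum_mem _ fun e he =>
        Submodule.smul_mem _ _ (Submodule.subset_span ⟨e, he, rfl⟩)
    have hstep : ∀ u ∈ W, ⁅(c • L ((0 : ℤ), (0 : ℕ)) : B), u⁆ ∈ W := by
      intro u hu
      have hle : W ≤ Submodule.comap
          ((LieAlgebra.ad F B (c • L ((0 : ℤ), (0 : ℕ))) : B →ₗ[F] B)) W := by
        rw [Submodule.span_le]
        rintro x ⟨e, he, rfl⟩
        simp only [Set.mem_preimage, SetLike.mem_coe, Submodule.mem_comap, LieAlgebra.ad_apply]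
        rw [smul_lie, hL' ((0 : ℤ), (0 : ℕ)) e]
        have hee : (((0 : ℤ) + e.1, (0 : ℕ) + e.2) : ℤ × ℕ) = e := by
          simp
        rw [hee]
        exact Submodule.smul_mem _ _ (Submodule.smul_mem _ _ (Submodule.subset_span ⟨e, he, rfl⟩))
      simpa [LieAlgebra.ad_apply] using hle hu
    have hall : ∀ m : ℕ, ((LieAlgebra.ad F B (c • L ((0 : ℤ), (0 : ℕ)))) ^ m) v ∈ W := by
      intro m
      induction m with
      | zero => simpa using hWv
      | succ m ih =>
        rw [pow_succ', Module.End.mul_apply, LieAlgebra.ad_apply]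
        exact hstep _ ih
    exact Submodule.finiteDimensional_of_le
      (Submodule.span_le.mpr (by rintro x ⟨m, rfl⟩; exact hall m))
end

section
/- For each ξ ∈ {1, −1}, the linear map ρ_ξ : B → B determined by ρ_ξ(L_{α,i}) = ξ·L_{ξ(α+i)−i, i} is a Lie algebra automorphism of B; ρ_1 is the identity, ρ_{−1} is an involution, and {ρ_ξ : ξ = ±1} is a subgroup of Aut(B) isomorphic to ℤ/2ℤ. -/
/-- For each `ξ ∈ {1, −1}`, the linear map `ρ_ξ` on the Block type Lie
algebra `B` determined by `ρ_ξ (L (α,i)) = ξ • L (ξ(α+i)−i, i)` is a Lie algebra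
automorphism of `B`; moreover `ρ_1 = id`, `ρ_{−1}` is an involution different from the
identity, so `{ρ_ξ : ξ = ±1}` is a subgroup of `Aut(B)` isomorphic to `ℤ/2ℤ`. -/
theorem rho_xi_automorphisms
    {F : Type*} [Field F] [IsAlgClosed F] [CharZero F]
    {B : Type*} [LieRing B] [LieAlgebra F B]
    (L : Module.Basis (ℤ × ℕ) F B)
    (hL : ∀ (α β : ℤ) (i j : ℕ),
      ⁅L (α, i), L (β, j)⁆ =
        (((α - 1) * (j + 1) - (β - 1) * (i + 1) : ℤ) : F) • L (α + β, i + j))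
    (ρ : ℤ → B →ₗ[F] B)
    (hρ : ∀ (ξ : ℤ) (α : ℤ) (i : ℕ),
      ρ ξ (L (α, i)) = (ξ : F) • L (ξ * (α + i) - i, i)) :
    (∀ ξ : ℤ, ξ = 1 ∨ ξ = -1 →
        Function.Bijective (ρ ξ) ∧ ∀ x y : B, ρ ξ ⁅x, y⁆ = ⁅ρ ξ x, ρ ξ y⁆) ∧
      ρ 1 = LinearMap.id ∧
      (ρ (-1)) ∘ₗ (ρ (-1)) = LinearMap.id ∧
      ρ (-1) ≠ LinearMap.id := by
  -- involution property
  have hinv : ∀ ξ : ℤ, ξ = 1 ∨ ξ = -1 → (ρ ξ) ∘ₗ (ρ ξ) = LinearMap.id := by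
    intro ξ hξ
    apply L.ext
    rintro ⟨α, i⟩
    have hξ2 : ξ * ξ = 1 := by rcases hξ with rfl | rfl <;> norm_num
    simp only [LinearMap.comp_apply, LinearMap.id_apply, hρ, map_smul, smul_smul]
    have hidx : ξ * (ξ * (α + (i : ℤ)) - (i : ℤ) + (i : ℤ)) - (i : ℤ) = α := by
      rw [sub_add_cancel, ← mul_assoc, hξ2]; ring
    rw [hidx]
    have : (ξ : F) * (ξ : F) = 1 := by
      rcases hξ with rfl | rfl <;> norm_num
    rw [this, one_smul]
  -- bracket preservation
  have hbr : ∀ ξ : ℤ, ξ = 1 ∨ ξ = -1 → ∀ x y : B, ρ ξ ⁅x, y⁆ = ⁅ρ ξ x, ρ ξ y⁆ := by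
    intro ξ hξ
    have hξF : (ξ : F) * (ξ : F) = 1 := by rcases hξ with rfl | rfl <;> norm_num
    -- first reduce to basis elements
    have key : ∀ (α β : ℤ) (i j : ℕ),
        ρ ξ ⁅L (α, i), L (β, j)⁆ = ⁅ρ ξ (L (α, i)), ρ ξ (L (β, j))⁆ := by
      intro α β i j
      rw [hL, map_smul, hρ, hρ, hρ, smul_lie, lie_smul, hL, smul_smul, smul_smul,
        smul_smul]
      have hidx : ξ * (α + β + ((i : ℤ) + (j : ℤ))) - ((i : ℤ) + (j : ℤ))
          = (ξ * (α + (i : ℤ)) - (i : ℤ)) + (ξ * (β + (j : ℤ)) - (j : ℤ)) := by ring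
      push_cast
      rw [hidx]
      congr 1
      rcases hξ with rfl | rfl <;> push_cast <;> ring
    let f : B →ₗ[F] B →ₗ[F] B := LinearMap.mk₂ F (fun x y => ρ ξ ⁅x, y⁆)
      (fun x₁ x₂ y => by simp only [add_lie, map_add]) (fun c x y => by simp only [smul_lie, map_smul])
      (fun x y₁ y₂ => by simp only [lie_add, map_add]) (fun c x y => by simp only [lie_smul, map_smul])
    let g : B →ₗ[F] B →ₗ[F] B := LinearMap.mk₂ F (fun x y => ⁅ρ ξ x, ρ ξ y⁆)
      (fun x₁ x₂ y => by simp only [map_add, add_lie]) (fun c x y => by simp only [map_smul, smul_lie])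
      (fun x y₁ y₂ => by simp only [map_add, lie_add]) (fun c x y => by simp only [map_smul, lie_smul])
    have hfg : f = g := by
      apply LinearMap.ext_basis L L
      rintro ⟨α, i⟩ ⟨β, j⟩
      exact key α β i j
    intro x y
    exact DFunLike.congr_fun (DFunLike.congr_fun hfg x) y
  refine ⟨fun ξ hξ => ⟨?_, hbr ξ hξ⟩, ?_, hinv (-1) (Or.inr rfl), ?_⟩
  · have h := hinv ξ hξ
    have hli : Function.LeftInverse (ρ ξ) (ρ ξ) := fun x =>
      DFunLike.congr_fun h x
    exact ⟨hli.injective, hli.surjective⟩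
  · apply L.ext
    rintro ⟨α, i⟩
    rw [hρ]
    norm_num
  · intro h
    have h0 := DFunLike.congr_fun h (L (0, 0))
    rw [hρ, LinearMap.id_apply] at h0
    norm_num at h0
    have h2 : (2 : F) • L (0 : ℤ × ℕ) = 0 := by
      rw [two_smul]
      rw [← Prod.mk_zero_zero]
      nth_rewrite 1 [← h0]
      simp
    rw [smul_eq_zero] at h2
    rcases h2 with h2 | h2
    · exact two_ne_zero h2
    · exact L.ne_zero _ h2
end
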